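/- arXiv:1503.01207 — 4 statements merged into one kernel-verified Lean document; each statement's English description precedes it below -/
import Mathlib

section
/- Let N ≥ 2 be an integer. Write N = Σ_{j=1}^l 2^{k_j} where k_1 < k_2 < … < k_l are the positions of the nonzero digits in the binary expansion of N, and let k be the largest integer with 2^k < N (so k = k_1 − 1 if N is a power of two, and k = k_l otherwise). Let T ⊆ ℤ_{N+1} be the image modulo N+1 of the set of integers {0} ∪ {−2^i, 2^i : i = 0, …, k} ∪ { Σ_{j=1}^i 2^{k_j} : i = 1, …, l−1 }. Then the cycle graph C_{N+1} on N+1 vertices admits a chordal cover Γ such that for every maximal clique C of Γ there exists t ∈ ℤ_{N+1} with t + C := {t + c : c ∈ C} ⊆ T. -/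
open scoped Classical

/-- A simple graph is chordal if every cycle of length at least 4 has a chord. -/
def IsChordal {V : Type*} (Γ : SimpleGraph V) : Prop :=
  ∀ ⦃u : V⦄ (c : Γ.Walk u u), c.IsCycle → 4 ≤ c.length →
    ∃ v w, v ∈ c.support ∧ w ∈ c.support ∧ Γ.Adj v w ∧ s(v, w) ∉ c.edges

namespace CycTri


open SimpleGraph

lemma walk_support_getElem {V : Type*} {G : SimpleGraph V} {u v : V} (w : G.Walk u v) :
    ∀ (i : ℕ) (h : i < w.support.length), w.support[i] = w.getVert i := by
  induction w with
  | nil =>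
    intro i h
    simp only [SimpleGraph.Walk.support_nil, List.length_singleton] at h
    have : i = 0 := by omega
    subst this
    simp [SimpleGraph.Walk.support_nil, SimpleGraph.Walk.getVert_zero]
  | @cons a b c hadj p ih =>
    intro i h
    cases i with
    | zero => simp [SimpleGraph.Walk.support_cons, SimpleGraph.Walk.getVert_zero]
    | succ j =>
      simp only [SimpleGraph.Walk.support_cons] at h ⊢
      rw [List.getElem_cons_succ]
      rw [ih j (by simpa using Nat.lt_of_succ_lt_succ h)]
      rw [SimpleGraph.Walk.getVert_cons_succ]

lemma walk_edges_index {V : Type*} {G : SimpleGraph V} {u v : V} (w : G.Walk u v) {e}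
    (he : e ∈ w.edges) : ∃ i, i < w.length ∧ e = s(w.getVert i, w.getVert (i + 1)) := by
  induction w with
  | nil => simp at he
  | @cons a b c hadj p ih =>
    rw [SimpleGraph.Walk.edges_cons, List.mem_cons] at he
    rcases he with rfl | he
    · exact ⟨0, by simp, by simp [SimpleGraph.Walk.getVert_zero,
        SimpleGraph.Walk.getVert_cons_succ]⟩
    · obtain ⟨i, hi, hei⟩ := ih he
      exact ⟨i + 1, by simp [SimpleGraph.Walk.length_cons]; omega,
        by simpa [SimpleGraph.Walk.getVert_cons_succ] using hei⟩

theorem isChordal_of_peo {V : Type*} (Γ : SimpleGraph V) (f : V → ℕ)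
    (hinj : Function.Injective f)
    (hpeo : ∀ v a b, Γ.Adj v a → Γ.Adj v b → f v < f a → f v < f b → a ≠ b → Γ.Adj a b) :
    IsChordal Γ := by
  intro u c hc hlen
  -- pick a vertex of minimal `f` on the cycle
  obtain ⟨v, hv⟩ : ∃ v, v ∈ c.support.argmin f := by
    cases h : c.support.argmin f with
    | none => exact absurd (List.argmin_eq_none.mp h) c.support_ne_nil
    | some m => exact ⟨m, by simp [h]⟩
  have hv_mem : v ∈ c.support := List.argmin_mem hv
  have hv_min : ∀ w ∈ c.support, f v ≤ f w := fun w hw =>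
    le_of_not_gt (List.not_lt_of_mem_argmin hw hv)
  set c' := c.rotate v hv_mem with hc'def
  have hc' : c'.IsCycle := hc.rotate hv_mem
  have hedges : c'.edges ~r c.edges := c.rotate_edges v hv_mem
  have hlen' : c'.length = c.length := by
    rw [← SimpleGraph.Walk.length_edges, ← SimpleGraph.Walk.length_edges]
    exact hedges.perm.length_eq
  set n := c'.length with hn
  have hn4 : 4 ≤ n := hlen' ▸ hlen
  -- support of c' as a list
  have hsl : c'.support.length = n + 1 := by rw [SimpleGraph.Walk.length_support]
  have htl : c'.support.tail.length = n := by
    rw [List.length_tail, hsl]; omega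
  have htget : ∀ (i : ℕ) (h : i < n), c'.support.tail[i] = c'.getVert (i + 1) := by
    intro i h
    have h1 : i + 1 < c'.support.length := by omega
    have h2 := walk_support_getElem c' (i + 1) h1
    rw [List.getElem_tail]
    exact h2
  have hnodup : c'.support.tail.Nodup := hc'.support_nodup
  have hinj_idx : ∀ (i j : ℕ), i < n → j < n →
      c'.getVert (i + 1) = c'.getVert (j + 1) → i = j := by
    intro i j hi hj hij
    rw [← htget i hi, ← htget j hj] at hij
    exact (List.Nodup.getElem_inj_iff hnodup).mp hij
  have hvlast : c'.getVert n = v := c'.getVert_length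
  have hv0 : c'.getVert 0 = v := c'.getVert_zero
  set v₁ := c'.getVert 1 with hv₁
  set v₂ := c'.getVert (n - 1) with hv₂
  have hadj1 : Γ.Adj v v₁ := by
    have := c'.adj_getVert_succ (i := 0) (by omega)
    rwa [hv0] at this
  have hadj2 : Γ.Adj v v₂ := by
    have := c'.adj_getVert_succ (i := n - 1) (by omega)
    rw [show n - 1 + 1 = n by omega, hvlast] at this
    exact this.symm
  have hvne1 : v ≠ v₁ := by
    intro h
    have : n - 1 = 0 := hinj_idx (n - 1) 0 (by omega) (by omega)
      (by rw [show n - 1 + 1 = n by omega, hvlast, show (0 : ℕ) + 1 = 1 by norm_num, ← hv₁]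
          exact h)
    omega
  have hvne2 : v ≠ v₂ := by
    intro h
    have : n - 1 = n - 2 := hinj_idx (n - 1) (n - 2) (by omega) (by omega)
      (by rw [show n - 1 + 1 = n by omega, hvlast, show n - 2 + 1 = n - 1 by omega, ← hv₂]
          exact h)
    omega
  have h12 : v₁ ≠ v₂ := by
    intro h
    have : (0 : ℕ) = n - 2 := hinj_idx 0 (n - 2) (by omega) (by omega)
      (by rw [show (0 : ℕ) + 1 = 1 by norm_num, show n - 2 + 1 = n - 1 by omega, ← hv₁, ← hv₂]
          exact h)
    omega
  -- membership in supports
  have hmem' : ∀ (i : ℕ), i < n → c'.getVert (i + 1) ∈ c.support := by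
    intro i hi
    have h1 : c'.getVert (i + 1) ∈ c'.support.tail := by
      rw [← htget i hi]; exact List.getElem_mem _
    have h2 : c'.getVert (i + 1) ∈ c.support.tail :=
      ((c.support_rotate v hv_mem).mem_iff).mp h1
    rw [c.support_eq_cons]
    exact List.mem_cons_of_mem _ h2
  have hmem1 : v₁ ∈ c.support := hmem' 0 (by omega)
  have hmem2 : v₂ ∈ c.support := by
    have := hmem' (n - 2) (by omega)
    rwa [show n - 2 + 1 = n - 1 by omega] at this
  have hf1 : f v < f v₁ := lt_of_le_of_ne (hv_min _ hmem1) (fun h => hvne1 (hinj h))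
  have hf2 : f v < f v₂ := lt_of_le_of_ne (hv_min _ hmem2) (fun h => hvne2 (hinj h))
  have hchord : Γ.Adj v₁ v₂ := hpeo v v₁ v₂ hadj1 hadj2 hf1 hf2 h12
  refine ⟨v₁, v₂, hmem1, hmem2, hchord, ?_⟩
  intro hmem
  have hmem'' : s(v₁, v₂) ∈ c'.edges := hedges.mem_iff.mpr hmem
  obtain ⟨i, hi, hei⟩ := walk_edges_index c' hmem''
  rw [Sym2.eq_iff] at hei
  rcases hei with ⟨h1, h2⟩ | ⟨h1, h2⟩
  · -- v₁ = getVert i, v₂ = getVert (i+1)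
    have hieq : i = n - 2 := hinj_idx i (n - 2) hi (by omega)
      (by rw [show n - 2 + 1 = n - 1 by omega, ← hv₂]; exact h2.symm)
    have h3 : (0 : ℕ) = n - 3 := hinj_idx 0 (n - 3) (by omega) (by omega)
      (by rw [show (0 : ℕ) + 1 = 1 by norm_num, show n - 3 + 1 = n - 2 by omega, ← hv₁, h1, hieq])
    omega
  · -- v₂ = getVert i, v₁ = getVert (i+1)
    have hieq : (0 : ℕ) = i := hinj_idx 0 i (by omega) hi
      (by rw [show (0 : ℕ) + 1 = 1 by norm_num, ← hv₁]; exact h1)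
    apply hvne2
    rw [← hv0, hieq]
    exact h2.symm



def S (kk : ℕ → ℕ) (i : ℕ) : ℕ := ∑ j ∈ Finset.range i, 2 ^ kk j

def Rel (l : ℕ) (kk : ℕ → ℕ) (a b : ℕ) : Prop :=
  (∃ i m c, i < l ∧ m ≤ kk i ∧ a = S kk i + c * 2 ^ m ∧ b = a + 2 ^ m ∧ b ≤ S kk (i + 1)) ∨
  (a = 0 ∧ ∃ i, 1 ≤ i ∧ i ≤ l ∧ b = S kk i)

def blk (kk : ℕ → ℕ) (l n : ℕ) : ℕ := Nat.findGreatest (fun i => S kk i ≤ n) l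

def IsS (kk : ℕ → ℕ) (l n : ℕ) : Prop := ∃ i, i ≤ l ∧ S kk i = n

noncomputable def fval (kk : ℕ → ℕ) (l N n : ℕ) : ℕ :=
  if n = 0 then (N + 1) * (N + 1) + (N + 1)
  else if IsS kk l n then (N + 1) * (N + 1) + n
  else padicValNat 2 (n - S kk (blk kk l n)) * (N + 1) + n

variable {kk : ℕ → ℕ} {l N : ℕ}

lemma S_succ (i : ℕ) : S kk (i + 1) = S kk i + 2 ^ kk i := Finset.sum_range_succ _ _

lemma S_zero : S kk 0 = 0 := rfl

lemma S_strictMono : StrictMono (S kk) :=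
  strictMono_nat_of_lt_succ fun n => by
    rw [S_succ]; exact Nat.lt_add_of_pos_right (Nat.pow_pos (by norm_num))

lemma S_mono : Monotone (S kk) := S_strictMono.monotone

lemma S_pos {i : ℕ} (hi : 1 ≤ i) : 0 < S kk i := by
  have := S_strictMono (kk := kk) (show 0 < i from hi)
  simpa [S_zero] using this

lemma rel_lt {a b : ℕ} (h : Rel l kk a b) : a < b := by
  rcases h with ⟨i, m, c, _, _, _, hb, _⟩ | ⟨ha, i, hi1, _, hb⟩
  · have : 0 < 2 ^ m := Nat.pow_pos (by norm_num)
    omega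
  · subst hb; subst ha; exact S_pos hi1

lemma rel_le {a b : ℕ} (h : Rel l kk a b) : b ≤ S kk l := by
  rcases h with ⟨i, m, c, hil, _, _, _, hb⟩ | ⟨_, i, _, hil, hb⟩
  · exact hb.trans (S_mono (by omega))
  · exact hb ▸ S_mono hil

lemma block_unique {i i' x : ℕ} (h1 : S kk i ≤ x) (h2 : x < S kk (i + 1))
    (h3 : S kk i' ≤ x) (h4 : x < S kk (i' + 1)) : i = i' := by
  rcases lt_trichotomy i i' with h | h | h
  · have := S_mono (kk := kk) (show i + 1 ≤ i' from h)
    omega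
  · exact h
  · have := S_mono (kk := kk) (show i' + 1 ≤ i from h)
    omega

lemma blk_spec (hsl : S kk l = N) {n : ℕ} (hn : n < N) :
    blk kk l n < l ∧ S kk (blk kk l n) ≤ n ∧ n < S kk (blk kk l n + 1) := by
  have h0 : S kk (blk kk l n) ≤ n :=
    Nat.findGreatest_spec (P := fun i => S kk i ≤ n) (Nat.zero_le l) (by simp [S_zero])
  have hle : blk kk l n ≤ l := Nat.findGreatest_le l
  have hlt : blk kk l n < l := by
    rcases eq_or_lt_of_le hle with h | h
    · exfalso; rw [h, hsl] at h0; omega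
    · exact h
  refine ⟨hlt, h0, ?_⟩
  have := Nat.findGreatest_is_greatest (P := fun i => S kk i ≤ n)
    (show blk kk l n < blk kk l n + 1 by omega) (by omega)
  omega

lemma blk_eq (hsl : S kk l = N) {i n : ℕ} (hil : i < l) (h1 : S kk i ≤ n)
    (h2 : n < S kk (i + 1)) : blk kk l n = i := by
  have hn : n < N := by
    have := S_mono (kk := kk) (show i + 1 ≤ l from hil)
    omega
  obtain ⟨_, hb1, hb2⟩ := blk_spec hsl hn
  exact block_unique hb1 hb2 h1 h2

lemma not_IsS_of_between {i n : ℕ} (h1 : S kk i < n) (h2 : n < S kk (i + 1)) :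
    ¬ IsS kk l n := by
  rintro ⟨i', _, rfl⟩
  have ha : i < i' := S_strictMono.lt_iff_lt.mp h1
  have hb : i' < i + 1 := S_strictMono.lt_iff_lt.mp h2
  omega

lemma fval_zero : fval kk l N 0 = (N + 1) * (N + 1) + (N + 1) := by simp [fval]

lemma fval_S {n : ℕ} (h0 : n ≠ 0) (hS : IsS kk l n) :
    fval kk l N n = (N + 1) * (N + 1) + n := by
  rw [fval, if_neg h0, if_pos hS]

lemma fval_int {n : ℕ} (h0 : n ≠ 0) (hS : ¬ IsS kk l n) :
    fval kk l N n = padicValNat 2 (n - S kk (blk kk l n)) * (N + 1) + n := by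
  rw [fval, if_neg h0, if_neg hS]

lemma v2_le_N {d : ℕ} (hd : d ≤ N) : padicValNat 2 d ≤ N := by
  rcases Nat.eq_zero_or_pos d with rfl | hd0
  · simp
  · have h1 : 2 ^ padicValNat 2 d ∣ d := pow_padicValNat_dvd
    have h2 : 2 ^ padicValNat 2 d ≤ d := Nat.le_of_dvd hd0 h1
    have h3 : padicValNat 2 d < 2 ^ padicValNat 2 d := Nat.lt_pow_self (by norm_num)
    omega

lemma fval_int_lt {n : ℕ} (hn : n ≤ N) (h0 : n ≠ 0) (hS : ¬ IsS kk l n) :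
    fval kk l N n < (N + 1) * (N + 1) := by
  rw [fval_int h0 hS]
  have h1 : padicValNat 2 (n - S kk (blk kk l n)) ≤ N := v2_le_N (by omega)
  have h2 := Nat.mul_le_mul_right (N + 1) h1
  have h3 : N * (N + 1) + (N + 1) = (N + 1) * (N + 1) := by ring
  omega

lemma fval_le_max {n : ℕ} (hn : n ≤ N) (h0 : n ≠ 0) :
    fval kk l N n ≤ (N + 1) * (N + 1) + N := by
  by_cases hS : IsS kk l n
  · rw [fval_S h0 hS]; omega
  · have := fval_int_lt hn h0 hS; omega

lemma fval_S_le {n : ℕ} (h0 : n ≠ 0) (hS : IsS kk l n) :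
    (N + 1) * (N + 1) ≤ fval kk l N n := by rw [fval_S h0 hS]; omega

lemma mod_helper {x y a b : ℕ} (ha : a ≤ N) (hb : b ≤ N)
    (h : x * (N + 1) + a = y * (N + 1) + b) : a = b := by
  have h1 : (x * (N + 1) + a) % (N + 1) = a := by
    rw [Nat.add_mod, Nat.mul_mod_left, Nat.zero_add, Nat.mod_mod_of_dvd, Nat.mod_eq_of_lt] <;>
      first | omega | exact dvd_rfl
  have h2 : (y * (N + 1) + b) % (N + 1) = b := by
    rw [Nat.add_mod, Nat.mul_mod_left, Nat.zero_add, Nat.mod_mod_of_dvd, Nat.mod_eq_of_lt] <;>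
      first | omega | exact dvd_rfl
  rw [h, h2] at h1
  omega

lemma fval_inj {a b : ℕ} (ha : a ≤ N) (hb : b ≤ N)
    (h : fval kk l N a = fval kk l N b) : a = b := by
  by_cases ha0 : a = 0 <;> by_cases hb0 : b = 0
  · omega
  · exfalso
    rw [ha0, fval_zero] at h
    have := fval_le_max (kk := kk) (l := l) hb hb0
    omega
  · exfalso
    rw [hb0, fval_zero] at h
    have := fval_le_max (kk := kk) (l := l) ha ha0
    omega
  · by_cases haS : IsS kk l a <;> by_cases hbS : IsS kk l b
    · rw [fval_S ha0 haS, fval_S hb0 hbS] at h; omega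
    · exfalso
      rw [fval_S ha0 haS] at h
      have := fval_int_lt hb hb0 hbS
      omega
    · exfalso
      rw [fval_S hb0 hbS] at h
      have := fval_int_lt ha ha0 haS
      omega
    · rw [fval_int ha0 haS, fval_int hb0 hbS] at h
      exact mod_helper ha hb h

lemma v2_ge {j d : ℕ} (h : 2 ^ j ∣ d) (hd0 : d ≠ 0) : j ≤ padicValNat 2 d :=
  (padicValNat_dvd_iff_le hd0).mp h

lemma v2_le {j d : ℕ} (hd : ¬ 2 ^ (j + 1) ∣ d) (hd0 : d ≠ 0) : padicValNat 2 d ≤ j := by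
  by_contra hc
  exact hd ((pow_dvd_pow 2 (by omega)).trans pow_padicValNat_dvd)



lemma arith_lt {j m v b a : ℕ} (hv : v ≤ j) (hjm : j + 1 ≤ m) (hb : b ≤ N) :
    v * (N + 1) + b < m * (N + 1) + a := by
  have h1 := Nat.mul_le_mul_right (N + 1) hv
  have h2 := Nat.mul_le_mul_right (N + 1) hjm
  rw [add_mul, one_mul] at h2
  omega

lemma nbr_S_nat (hsl : S kk l = N) {i₀ a b : ℕ} (h1 : 1 ≤ i₀) (h2 : i₀ ≤ l)
    (ha : a = S kk i₀) (haN : a ≤ N) (hbN : b ≤ N)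
    (hrel : Rel l kk a b ∨ Rel l kk b a)
    (hf : fval kk l N a < fval kk l N b) :
    b = 0 ∨ (i₀ < l ∧ b = S kk (i₀ + 1)) := by
  have ha0 : a ≠ 0 := by
    have := S_pos (kk := kk) h1; omega
  have hfa : fval kk l N a = (N + 1) * (N + 1) + a := fval_S ha0 ⟨i₀, h2, ha.symm⟩
  by_cases hb0 : b = 0
  · exact Or.inl hb0
  rcases hrel with h | h
  · rcases h with ⟨i', m, c, hil, hm, haeq, hbeq, hble⟩ | ⟨haz, _⟩
    · have hp : 0 < 2 ^ m := Nat.pow_pos (by norm_num)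
      have hai : S kk i' ≤ a := by omega
      have ha2 : a < S kk (i' + 1) := by omega
      have hii : i' = i₀ := by
        refine block_unique hai ha2 (le_of_eq ha.symm) ?_
        rw [ha]
        exact S_strictMono (by omega)
      subst hii
      rcases eq_or_lt_of_le hm with hmeq | hmlt
      · right
        refine ⟨hil, ?_⟩
        rw [S_succ, ← ha, ← hmeq]
        omega
      · exfalso
        have hble' : b < S kk (i' + 1) := by
          rcases eq_or_lt_of_le hble with hbe | hbe
          · exfalso
            rw [S_succ, ← ha] at hbe
            have : (2 : ℕ) ^ m < 2 ^ kk i' := Nat.pow_lt_pow_right (by norm_num) hmlt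
            omega
          · exact hbe
        have hbint : S kk i' < b := by omega
        have hbS : ¬ IsS kk l b := not_IsS_of_between hbint hble'
        have := fval_int_lt (kk := kk) (l := l) hbN hb0 hbS
        have := fval_S_le (kk := kk) (l := l) (N := N) ha0 ⟨i', h2, ha.symm⟩
        omega
    · exact absurd haz ha0
  · rcases h with ⟨i'', m, c, hil, hm, hbeq, haeq, hale⟩ | ⟨hbz, _⟩
    · exfalso
      have hp : 0 < 2 ^ m := Nat.pow_pos (by norm_num)
      have hba : b < a := by omega
      have hbi : S kk i'' ≤ b := by omega
      have hbi2 : b < S kk (i'' + 1) := by omega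
      rcases eq_or_lt_of_le hbi with hbe | hbe
      · -- b = S i''
        have hbS : IsS kk l b := ⟨i'', by omega, hbe⟩
        rw [fval_S hb0 hbS, hfa] at hf
        omega
      · have hbS : ¬ IsS kk l b := not_IsS_of_between hbe hbi2
        have := fval_int_lt (kk := kk) (l := l) hbN hb0 hbS
        rw [hfa] at hf
        omega
    · exact Or.inl hbz

lemma nbr_int_nat (hsl : S kk l = N) {a b : ℕ} (haN : a ≤ N) (hbN : b ≤ N)
    (haS : ¬ IsS kk l a)
    (hrel : Rel l kk a b ∨ Rel l kk b a)
    (hf : fval kk l N a < fval kk l N b) :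
    b = a - 2 ^ padicValNat 2 (a - S kk (blk kk l a)) ∨
    b = a + 2 ^ padicValNat 2 (a - S kk (blk kk l a)) := by
  have ha0 : a ≠ 0 := fun h => haS ⟨0, Nat.zero_le l, by simp [S_zero, h]⟩
  have haN' : a < N := lt_of_le_of_ne haN fun h => haS ⟨l, le_rfl, by rw [hsl, h]⟩
  obtain ⟨hbl, hbs1, hbs2⟩ := blk_spec hsl haN'
  set i := blk kk l a with hidef
  set d := a - S kk i with hddef
  have hSa : S kk i < a := lt_of_le_of_ne hbs1 fun h => haS ⟨i, by omega, h⟩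
  have hd0 : d ≠ 0 := by omega
  set m := padicValNat 2 d with hmdef
  have hdvd : 2 ^ m ∣ d := pow_padicValNat_dvd
  have h2m : 2 ^ m ≤ d := Nat.le_of_dvd (by omega) hdvd
  have hndvd : ¬ 2 ^ (m + 1) ∣ d := by
    intro hdd
    have := v2_ge hdd hd0
    omega
  have hfa : fval kk l N a = m * (N + 1) + a := fval_int ha0 haS
  have hSsucc : S kk (i + 1) = S kk i + 2 ^ kk i := S_succ i
  rcases hrel with h | h
  · rcases h with ⟨i', j, c, hil, hj, haeq, hbeq, hble⟩ | ⟨haz, _⟩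
    · have hp : 0 < 2 ^ j := Nat.pow_pos (by norm_num)
      have hai' : S kk i' ≤ a := by omega
      have ha2 : a < S kk (i' + 1) := by omega
      have hii : i' = i := block_unique hai' ha2 hbs1 hbs2
      subst hii
      have hjd : 2 ^ j ∣ d := ⟨c, by
        have hh : (2 : ℕ) ^ j * c = c * 2 ^ j := by ring
        omega⟩
      have hjm : j ≤ m := v2_ge hjd hd0
      rcases eq_or_lt_of_le hjm with hje | hjlt
      · right
        have hpow : (2 : ℕ) ^ j = 2 ^ m := by rw [hje]
        omega
      · exfalso
        have hblt : b < S kk (i + 1) := by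
          rcases eq_or_lt_of_le hble with hbe | hbe
          · exfalso
            have hde : d + 2 ^ j = 2 ^ kk i := by omega
            have hjk : j < kk i := by
              have h6 : (2 : ℕ) ^ j ≤ d := Nat.le_of_dvd (by omega) hjd
              have hdk : d < 2 ^ kk i := by omega
              exact (Nat.pow_lt_pow_iff_right (by norm_num : 1 < 2)).mp (by omega)
            have hd1 : 2 ^ (j + 1) ∣ d := (pow_dvd_pow 2 (by omega)).trans hdvd
            have hd2 : 2 ^ (j + 1) ∣ 2 ^ kk i := pow_dvd_pow 2 (by omega)
            have hd3 : 2 ^ (j + 1) ∣ 2 ^ j := by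
              have := Nat.dvd_sub hd2 hd1
              rw [show 2 ^ kk i - d = 2 ^ j by omega] at this
              exact this
            have := Nat.le_of_dvd hp hd3
            have : (2 : ℕ) ^ j < 2 ^ (j + 1) := Nat.pow_lt_pow_right (by norm_num) (by omega)
            omega
          · exact hbe
        have hbint : S kk i < b := by omega
        have hbS : ¬ IsS kk l b := not_IsS_of_between hbint hblt
        have hb0 : b ≠ 0 := by omega
        have hblk : blk kk l b = i := blk_eq hsl hil (by omega) hblt
        have hv' : padicValNat 2 (b - S kk i) ≤ j := by
          apply v2_le _ (by omega)
          intro hdd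
          have hd1 : 2 ^ (j + 1) ∣ d := (pow_dvd_pow 2 (by omega)).trans hdvd
          have : 2 ^ (j + 1) ∣ 2 ^ j := by
            have h5 := Nat.dvd_sub hdd hd1
            rw [show b - S kk i - d = 2 ^ j by omega] at h5
            exact h5
          have := Nat.le_of_dvd hp this
          have : (2 : ℕ) ^ j < 2 ^ (j + 1) := Nat.pow_lt_pow_right (by norm_num) (by omega)
          omega
        have hfb : fval kk l N b = padicValNat 2 (b - S kk i) * (N + 1) + b := by
          rw [fval_int hb0 hbS, hblk]
        rw [hfa, hfb] at hf
        have := arith_lt (N := N) (a := a) (m := m) hv' (by omega) hbN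
        omega
    · exact absurd haz ha0
  · rcases h with ⟨i', j, c, hil, hj, hbeq, haeq, hale⟩ | ⟨hbz, i₂, hi₂1, hi₂l, haeq⟩
    · have hp : 0 < 2 ^ j := Nat.pow_pos (by norm_num)
      have hba : b < a := by omega
      have hii : i' = i := by
        by_contra hne
        rcases lt_or_gt_of_ne hne with hlt | hgt
        · have := S_mono (kk := kk) (show i' + 1 ≤ i from hlt)
          omega
        · have := S_mono (kk := kk) (show i + 1 ≤ i' from hgt)
          omega
      subst hii
      have hjd : 2 ^ j ∣ d := ⟨c + 1, by
        have hh : (2 : ℕ) ^ j * (c + 1) = c * 2 ^ j + 2 ^ j := by ring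
        omega⟩
      have hjm : j ≤ m := v2_ge hjd hd0
      rcases eq_or_lt_of_le hjm with hje | hjlt
      · left
        have hpow : (2 : ℕ) ^ j = 2 ^ m := by rw [hje]
        omega
      · exfalso
        rcases Nat.eq_zero_or_pos c with rfl | hc
        · -- b = S i, d = 2^j
          have hde : d = 2 ^ j := by omega
          have : m = j := by
            rw [hmdef, hde, padicValNat.prime_pow (p := 2) j]
          omega
        · have hbint : S kk i < b := by
            have : 0 < c * 2 ^ j := Nat.mul_pos hc hp
            omega
          have hblt : b < S kk (i + 1) := by omega
          have hbS : ¬ IsS kk l b := not_IsS_of_between hbint hblt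
          have hb0 : b ≠ 0 := by omega
          have hblk : blk kk l b = i := blk_eq hsl hbl (by omega) hblt
          have hv' : padicValNat 2 (b - S kk i) ≤ j := by
            apply v2_le _ (by omega)
            intro hdd
            have hd1 : 2 ^ (j + 1) ∣ d := (pow_dvd_pow 2 (by omega)).trans hdvd
            have : 2 ^ (j + 1) ∣ 2 ^ j := by
              have h5 := Nat.dvd_sub hd1 hdd
              rw [show d - (b - S kk i) = 2 ^ j by omega] at h5
              exact h5
            have := Nat.le_of_dvd hp this
            have : (2 : ℕ) ^ j < 2 ^ (j + 1) := Nat.pow_lt_pow_right (by norm_num) (by omega)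
            omega
          have hfb : fval kk l N b = padicValNat 2 (b - S kk i) * (N + 1) + b := by
            rw [fval_int hb0 hbS, hblk]
          rw [hfa, hfb] at hf
          have := arith_lt (N := N) (a := a) (m := m) hv' (by omega) hbN
          omega
    · exact absurd ⟨i₂, hi₂l, haeq.symm⟩ haS

lemma int_adj_pair (hsl : S kk l = N) {a : ℕ} (haN : a ≤ N) (haS : ¬ IsS kk l a) :
    Rel l kk (a - 2 ^ padicValNat 2 (a - S kk (blk kk l a)))
      (a + 2 ^ padicValNat 2 (a - S kk (blk kk l a))) := by
  have ha0 : a ≠ 0 := fun h => haS ⟨0, Nat.zero_le l, by simp [S_zero, h]⟩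
  have haN' : a < N := lt_of_le_of_ne haN fun h => haS ⟨l, le_rfl, by rw [hsl, h]⟩
  obtain ⟨hbl, hbs1, hbs2⟩ := blk_spec hsl haN'
  set i := blk kk l a with hidef
  set d := a - S kk i with hddef
  have hSa : S kk i < a := lt_of_le_of_ne hbs1 fun h => haS ⟨i, by omega, h⟩
  have hd0 : d ≠ 0 := by omega
  set m := padicValNat 2 d with hmdef
  have hdvd : 2 ^ m ∣ d := pow_padicValNat_dvd
  have h2m : 2 ^ m ≤ d := Nat.le_of_dvd (by omega) hdvd
  have hndvd : ¬ 2 ^ (m + 1) ∣ d := by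
    intro hdd
    have := v2_ge hdd hd0
    omega
  have hSsucc : S kk (i + 1) = S kk i + 2 ^ kk i := S_succ i
  have hdk : d < 2 ^ kk i := by omega
  have hmk : m < kk i := by
    exact (Nat.pow_lt_pow_iff_right (by norm_num : 1 < 2)).mp (by omega)
  obtain ⟨e, he⟩ := hdvd
  have hodd : Odd e := by
    rcases Nat.even_or_odd e with hev | hod
    · exfalso
      obtain ⟨e', rfl⟩ := hev
      exact hndvd ⟨e', by rw [he, pow_succ]; ring⟩
    · exact hod
  obtain ⟨c', hc'⟩ := hodd
  have hps : (2 : ℕ) ^ (m + 1) = 2 ^ m * 2 := pow_succ 2 m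
  have hE : (2 : ℕ) ^ m * 2 ^ (kk i - m) = 2 ^ kk i := by
    rw [← pow_add]; congr 1; omega
  have hec : e < 2 ^ (kk i - m) := by
    by_contra hcon
    push_neg at hcon
    have := Nat.mul_le_mul_left (2 ^ m) hcon
    omega
  have hd2 : d + 2 ^ m ≤ 2 ^ kk i := by
    have h1 : e + 1 ≤ 2 ^ (kk i - m) := by omega
    have := Nat.mul_le_mul_left (2 ^ m) h1
    rw [Nat.mul_add, Nat.mul_one] at this
    omega
  refine Or.inl ⟨i, m + 1, c', hbl, by omega, ?_, ?_, ?_⟩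
  · -- a - 2^m = S i + c' * 2^(m+1)
    have : c' * 2 ^ (m + 1) = d - 2 ^ m := by
      rw [hps, he, hc']
      ring_nf
      omega
    omega
  · -- a + 2^m = (a - 2^m) + 2^(m+1)
    omega
  · -- a + 2^m ≤ S (i+1)
    omega

section Main


variable {N : ℕ} [NeZero (N + 1)]

lemma val_inj' {x y : ZMod (N + 1)} (h : x.val = y.val) : x = y :=
  ZMod.val_injective _ h

lemma cast_val (x : ZMod (N + 1)) : ((x.val : ℕ) : ZMod (N + 1)) = x :=
  ZMod.natCast_rightInverse x

end Main

theorem main_peo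
    (N : ℕ) (hN : 2 ≤ N)
    (l : ℕ) (kk : ℕ → ℕ) (hl1 : 1 ≤ l)
    (hsl : S kk l = N) :
    let Γ : SimpleGraph (ZMod (N + 1)) :=
      SimpleGraph.fromRel (fun x y => Rel l kk x.val y.val)
    ∀ v a b : ZMod (N + 1), Γ.Adj v a → Γ.Adj v b →
      fval kk l N v.val < fval kk l N a.val → fval kk l N v.val < fval kk l N b.val →
      a ≠ b → Γ.Adj a b := by
  intro Γ v a b hva hvb hfa hfb hab
  rw [SimpleGraph.fromRel_adj] at hva hvb
  obtain ⟨hvane, hrela⟩ := hva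
  obtain ⟨hvbne, hrelb⟩ := hvb
  have hvval : v.val ≤ N := by have := ZMod.val_lt v; omega
  have haval : a.val ≤ N := by have := ZMod.val_lt a; omega
  have hbval : b.val ≤ N := by have := ZMod.val_lt b; omega
  have habval : a.val ≠ b.val := fun h => hab (val_inj' h)
  by_cases hv0 : v.val = 0
  · exfalso
    have ha0 : a.val ≠ 0 := fun h => hvane (val_inj' (by rw [hv0, h]))
    have := fval_le_max (kk := kk) (l := l) haval ha0
    rw [hv0, fval_zero] at hfa
    omega
  · by_cases hvS : IsS kk l v.val
    · obtain ⟨i₀, hi₀l, hSi₀⟩ := hvS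
      have hi₀1 : 1 ≤ i₀ := by
        rcases Nat.eq_zero_or_pos i₀ with rfl | h
        · exact absurd (hSi₀.symm.trans (S_zero (kk := kk))) hv0
        · exact h
      have pa := nbr_S_nat hsl hi₀1 hi₀l hSi₀.symm hvval haval hrela hfa
      have pb := nbr_S_nat hsl hi₀1 hi₀l hSi₀.symm hvval hbval hrelb hfb
      rw [SimpleGraph.fromRel_adj]
      refine ⟨hab, ?_⟩
      rcases pa with ha | ⟨hi₀lt, ha⟩ <;> rcases pb with hb | ⟨hi₀lt', hb⟩
      · exact absurd (ha.trans hb.symm) habval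
      · left
        rw [ha, hb]
        exact Or.inr ⟨rfl, i₀ + 1, by omega, by omega, rfl⟩
      · right
        rw [ha, hb]
        exact Or.inr ⟨rfl, i₀ + 1, by omega, by omega, rfl⟩
      · exact absurd (ha.trans hb.symm) habval
    · have pa := nbr_int_nat hsl hvval haval hvS hrela hfa
      have pb := nbr_int_nat hsl hvval hbval hvS hrelb hfb
      have hpair := int_adj_pair hsl hvval hvS
      rw [SimpleGraph.fromRel_adj]
      refine ⟨hab, ?_⟩
      rcases pa with ha | ha <;> rcases pb with hb | hb
      · exact absurd (ha.trans hb.symm) habval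
      · left; rw [ha, hb]; exact hpair
      · right; rw [ha, hb]; exact hpair
      · exact absurd (ha.trans hb.symm) habval

end CycTri

/-- **Theorem 7: triangulation of the `(N+1)`-cycle.** Write `N = Σ_{j=1}^l 2^{k_j}`
with `k_1 < … < k_l` (binary expansion; here `kk j = k_{j+1}`) and let `k` be the
largest integer with `2^k < N`. Let `T ⊆ ℤ_{N+1}` be the image mod `N+1` of
`{0} ∪ {±2^i : 0 ≤ i ≤ k} ∪ {Σ_{j=1}^i 2^{k_j} : 1 ≤ i ≤ l−1}`. Then the cycle graph
`C_{N+1}` has a chordal cover all of whose maximal cliques have a translate contained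
in `T`. -/

theorem cycle_triangulation_succ
    (N : ℕ) (hN : 2 ≤ N)
    (l : ℕ) (kk : ℕ → ℕ)
    (hmono : ∀ i j, i < j → j < l → kk i < kk j)
    (hsum : N = ∑ j ∈ Finset.range l, 2 ^ kk j)
    (k : ℕ) (hk : 2 ^ k < N) (hkmax : ∀ k', 2 ^ k' < N → k' ≤ k) :
    let T : Finset (ZMod (N + 1)) :=
      {(0 : ZMod (N + 1))} ∪
        (Finset.range (k + 1)).image (fun i => (((2 : ℤ) ^ i : ℤ) : ZMod (N + 1))) ∪
        (Finset.range (k + 1)).image (fun i => ((-((2 : ℤ) ^ i) : ℤ) : ZMod (N + 1))) ∪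
        (Finset.Icc 1 (l - 1)).image
          (fun i => ((∑ j ∈ Finset.range i, 2 ^ kk j : ℕ) : ZMod (N + 1)))
    ∃ Γ : SimpleGraph (ZMod (N + 1)),
      IsChordal Γ ∧
      (SimpleGraph.fromRel fun i j : ZMod (N + 1) => i - j = 1) ≤ Γ ∧
      ∀ C : Set (ZMod (N + 1)), Γ.IsClique C →
        (∀ C', Γ.IsClique C' → C ⊆ C' → C' = C) →
        ∃ t : ZMod (N + 1), (fun c => t + c) '' C ⊆ ↑T := by
  intro T
  have hTdef : T =
      {(0 : ZMod (N + 1))} ∪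
        (Finset.range (k + 1)).image (fun i => (((2 : ℤ) ^ i : ℤ) : ZMod (N + 1))) ∪
        (Finset.range (k + 1)).image (fun i => ((-((2 : ℤ) ^ i) : ℤ) : ZMod (N + 1))) ∪
        (Finset.Icc 1 (l - 1)).image
          (fun i => ((∑ j ∈ Finset.range i, 2 ^ kk j : ℕ) : ZMod (N + 1))) := rfl
  have hl1 : 1 ≤ l := by
    by_contra h
    have : l = 0 := by omega
    rw [this] at hsum
    simp at hsum
    omega
  have hsl : CycTri.S kk l = N := hsum.symm
  set Γ : SimpleGraph (ZMod (N + 1)) :=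
    SimpleGraph.fromRel (fun x y => CycTri.Rel l kk x.val y.val) with hΓ
  -- basic cast facts
  have hNcast : ((N : ℕ) : ZMod (N + 1)) = -1 := by
    have h1 : ((N + 1 : ℕ) : ZMod (N + 1)) = 0 := ZMod.natCast_self _
    push_cast at h1 ⊢
    linear_combination h1
  -- membership lemmas about T
  have mem0 : (0 : ZMod (N + 1)) ∈ T := by
    rw [hTdef]
    simp
  have memPow : ∀ j : ℕ, j ≤ k → ((2 ^ j : ℕ) : ZMod (N + 1)) ∈ T := by
    intro j hj
    rw [hTdef]
    refine Finset.mem_union_left _ (Finset.mem_union_left _ (Finset.mem_union_right _ ?_))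
    refine Finset.mem_image.mpr ⟨j, Finset.mem_range.mpr (by omega), ?_⟩
    push_cast
    ring
  have memN : ((N : ℕ) : ZMod (N + 1)) ∈ T := by
    rw [hTdef]
    refine Finset.mem_union_left _ (Finset.mem_union_right _ ?_)
    refine Finset.mem_image.mpr ⟨0, Finset.mem_range.mpr (by omega), ?_⟩
    rw [hNcast]
    push_cast
    ring
  have memS : ∀ i : ℕ, 1 ≤ i → i ≤ l - 1 → ((CycTri.S kk i : ℕ) : ZMod (N + 1)) ∈ T := by
    intro i h1 h2
    rw [hTdef]
    refine Finset.mem_union_right _ ?_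
    exact Finset.mem_image.mpr ⟨i, Finset.mem_Icc.mpr ⟨h1, h2⟩, rfl⟩
  refine ⟨Γ, ?_, ?_, ?_⟩
  · -- chordality
    apply CycTri.isChordal_of_peo Γ (fun x => CycTri.fval kk l N x.val)
    · intro x y hxy
      have hx : x.val ≤ N := by have := ZMod.val_lt x; omega
      have hy : y.val ≤ N := by have := ZMod.val_lt y; omega
      exact CycTri.val_inj' (CycTri.fval_inj hx hy hxy)
    · exact CycTri.main_peo N hN l kk hl1 hsl
  · -- cover
    intro x y hxy
    rw [SimpleGraph.fromRel_adj] at hxy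
    obtain ⟨hne, hor⟩ := hxy
    have hstep : ∀ u w : ZMod (N + 1), w - u = 1 →
        CycTri.Rel l kk u.val w.val ∨ CycTri.Rel l kk w.val u.val := by
      intro u w h
      have hw : w = u + 1 := by linear_combination h
      have huval : u.val ≤ N := by have := ZMod.val_lt u; omega
      by_cases hu : u.val < N
      · have h3 : ((u.val + 1 : ℕ) : ZMod (N + 1)) = w := by
          rw [Nat.cast_add, Nat.cast_one, CycTri.cast_val u]
          exact hw.symm
        have hwval : w.val = u.val + 1 := by
          rw [← h3]
          exact ZMod.val_cast_of_lt (show u.val + 1 < N + 1 by omega)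
        obtain ⟨hbl, hb1, hb2⟩ := CycTri.blk_spec hsl hu
        left
        refine Or.inl ⟨CycTri.blk kk l u.val, 0, u.val - CycTri.S kk (CycTri.blk kk l u.val),
          hbl, Nat.zero_le _, ?_, ?_, ?_⟩
        · rw [pow_zero, mul_one]; omega
        · rw [pow_zero]; omega
        · omega
      · have huN : u.val = N := by omega
        have hwv : w = 0 := by
          rw [hw, ← CycTri.cast_val u, huN]
          rw [show ((N : ℕ) : ZMod (N + 1)) + 1 = ((N + 1 : ℕ) : ZMod (N + 1)) by
            push_cast; ring]
          exact ZMod.natCast_self _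
        right
        refine Or.inr ⟨by rw [hwv, ZMod.val_zero], l, hl1, le_rfl, by rw [huN, hsl]⟩
    rw [hΓ, SimpleGraph.fromRel_adj]
    refine ⟨hne, ?_⟩
    rcases hor with h | h
    · exact (hstep y x h).symm
    · exact hstep x y h
  · -- cliques
    intro C hclique _hmax
    by_cases hCne : C.Nonempty
    · have hne' : (ZMod.val '' C).Nonempty := hCne.image _
      obtain ⟨x, hxC, hxval⟩ := Nat.sInf_mem hne'
      have hxmin : ∀ u ∈ C, x.val ≤ u.val := fun u hu =>
        le_of_eq_of_le hxval (Nat.sInf_le ⟨u, hu, rfl⟩)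
      refine ⟨-x, ?_⟩
      rintro z ⟨u, huC, rfl⟩
      change -x + u ∈ _
      by_cases hux : u = x
      · rw [hux]
        simpa using mem0
      · have hadj : Γ.Adj x u := hclique hxC huC (fun h => hux h.symm)
        rw [hΓ, SimpleGraph.fromRel_adj] at hadj
        obtain ⟨_, hrel | hrel⟩ := hadj
        swap
        · exact absurd (CycTri.rel_lt hrel) (not_lt.mpr (hxmin u huC))
        rcases hrel with ⟨i, m, c, hil, hm, hxeq, hueq, hule⟩ | ⟨hx0, i, hi1, hil, hueq⟩
        · -- block edge: difference 2^m
          have hdiff : -x + u = ((2 ^ m : ℕ) : ZMod (N + 1)) := by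
            rw [← CycTri.cast_val u, ← CycTri.cast_val x, hueq]
            push_cast
            ring
          rw [hdiff]
          by_cases hmk : m ≤ k
          · exact memPow m hmk
          · have h1 : ¬ (2 : ℕ) ^ m < N := fun h => hmk (hkmax m h)
            have h2 : (2 : ℕ) ^ m ≤ N := by
              have h3 : (2 : ℕ) ^ m ≤ 2 ^ kk i := Nat.pow_le_pow_right (by norm_num) hm
              have h4 := CycTri.S_succ (kk := kk) i
              have h5 := CycTri.S_mono (kk := kk) (show i + 1 ≤ l from hil)
              omega
            rw [show (2 : ℕ) ^ m = N by omega]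
            exact memN
        · -- spine edge: u = S i
          have hx0' : x = 0 := by
            rw [← CycTri.cast_val x, hx0]
            simp
          have hdiff : -x + u = ((CycTri.S kk i : ℕ) : ZMod (N + 1)) := by
            rw [hx0', ← CycTri.cast_val u, hueq]
            simp
          rw [hdiff]
          rcases Nat.lt_or_ge i l with hilt | hige
          · exact memS i hi1 (by omega)
          · have : i = l := by omega
            rw [this, hsl]
            exact memN
    · rw [Set.not_nonempty_iff_eq_empty] at hCne
      exact ⟨0, by rw [hCne]; simp⟩
end

section
/- Let N and d be positive integers with d dividing N. The map φ : ℤ_{N/d} × {0,…,d−1} → ℤ_N defined by φ(q,r) = q·d + r (where q·d is computed from any integer lift of q) is a well-defined bijection. Moreover, if i, i' ∈ ℤ_N are adjacent in the d-th power C_N^d of the cycle graph (i.e. i ≠ i' and i − i' lies in the image of {±1, ±2, …, ±d} in ℤ_N), and i = φ(q,r), i' = φ(q',r'), then q − q' lies in {−1, 0, 1} in ℤ_{N/d}; that is, under the identification φ, the graph C_N^d is a subgraph of the strong product C_{N/d} ⊠ K_d. -/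
/-- The identification `φ : ℤ_{N/d} × {0,…,d−1} → ℤ_N`, `φ(q,r) = q·d + r`. -/
def cyclePhi (N d : ℕ) (p : ZMod (N / d) × Fin d) : ZMod N :=
  ((p.1.val * d + p.2.val : ℕ) : ZMod N)

/-- **The `d`-th power of the `N`-cycle embeds in `C_{N/d} ⊠ K_d`.** If `d ∣ N`, the map
`φ(q,r) = q·d + r` is a bijection `ℤ_{N/d} × {0,…,d−1} → ℤ_N`, and whenever
`φ(q,r), φ(q',r')` are adjacent in the `d`-th power of the cycle graph `C_N` (i.e. they
are distinct and their difference is the image of some integer `m` with `1 ≤ |m| ≤ d`),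
one has `q − q' ∈ {−1, 0, 1}` in `ℤ_{N/d}`; that is, under `φ` the graph `C_N^d` is a
subgraph of the strong product `C_{N/d} ⊠ K_d`. -/
theorem cycle_power_subgraph_strong_product
    (N d : ℕ) (hd : 0 < d) (hN : 0 < N) (hdvd : d ∣ N) :
    Function.Bijective (cyclePhi N d) ∧
    ∀ (q q' : ZMod (N / d)) (r r' : Fin d),
      cyclePhi N d (q, r) ≠ cyclePhi N d (q', r') →
      (∃ m : ℤ, 1 ≤ |m| ∧ |m| ≤ (d : ℤ) ∧
        cyclePhi N d (q, r) - cyclePhi N d (q', r') = (m : ZMod N)) →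
      (q - q' = 0 ∨ q - q' = 1 ∨ q - q' = -1) := by
  haveI : NeZero N := ⟨hN.ne'⟩
  have hn : N / d * d = N := Nat.div_mul_cancel hdvd
  have hnpos : 0 < N / d := Nat.div_pos (Nat.le_of_dvd hN hdvd) hd
  haveI : NeZero (N / d) := ⟨hnpos.ne'⟩
  have hmod : ∀ (q : ZMod (N / d)) (r : Fin d), (q.val * d + r.val) % d = r.val := by
    intro q r
    rw [add_comm, Nat.add_mul_mod_self_right, Nat.mod_eq_of_lt r.isLt]
  have hlt : ∀ (q : ZMod (N / d)) (r : Fin d), q.val * d + r.val < N := by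
    intro q r
    have h1 : q.val < N / d := ZMod.val_lt q
    have h2 : r.val < d := r.isLt
    nlinarith
  have hinj : Function.Injective (cyclePhi N d) := by
    rintro ⟨q, r⟩ ⟨q', r'⟩ h
    have h2 : q.val * d + r.val = q'.val * d + r'.val := by
      have h1 := (ZMod.natCast_eq_natCast_iff' _ _ _).mp h
      rwa [Nat.mod_eq_of_lt (hlt q r), Nat.mod_eq_of_lt (hlt q' r')] at h1
    have hr : r.val = r'.val := by
      have e1 := hmod q r
      have e2 := hmod q' r'
      rw [h2] at e1
      omega
    have hq : q.val = q'.val := Nat.eq_of_mul_eq_mul_right hd (by omega)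
    exact Prod.ext (ZMod.val_injective _ hq) (Fin.ext hr)
  refine ⟨(Fintype.bijective_iff_injective_and_card _).mpr ⟨hinj, ?_⟩, ?_⟩
  · simp [ZMod.card, hn]
  · rintro q q' r r' hne ⟨m, hm1, hm2, hm3⟩
    have hdvdN : (N : ℤ) ∣ ((q.val * d + r.val : ℤ) - (q'.val * d + r'.val : ℤ) - m) := by
      apply (ZMod.intCast_zmod_eq_zero_iff_dvd _ _).mp
      push_cast
      push_cast [cyclePhi] at hm3
      linear_combination hm3
    obtain ⟨k, hk⟩ := hdvdN
    have hNd : (N : ℤ) = (N / d : ℕ) * d := by exact_mod_cast hn.symm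
    set x : ℤ := (q.val : ℤ) - q'.val - (N / d : ℕ) * k with hx
    have hdx : (d : ℤ) * x = m - ((r.val : ℤ) - r'.val) := by
      rw [hNd] at hk
      rw [hx]; ring_nf; ring_nf at hk; linarith
    have hrb : |(r.val : ℤ) - r'.val| ≤ (d : ℤ) - 1 := by
      have := r.isLt; have := r'.isLt
      rw [abs_le]; omega
    have hxb : |x| ≤ 1 := by
      have h1 : (d : ℤ) * |x| = |(d : ℤ) * x| := by
        rw [abs_mul, abs_of_nonneg (by positivity : (0:ℤ) ≤ d)]
      have h2 : |(d : ℤ) * x| ≤ 2 * d - 1 := by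
        rw [hdx]
        calc |m - ((r.val : ℤ) - r'.val)| ≤ |m| + |(r.val : ℤ) - r'.val| := abs_sub _ _
        _ ≤ 2 * d - 1 := by linarith
      nlinarith [abs_nonneg x]
    have hqq : q - q' = ((x : ℤ) : ZMod (N / d)) := by
      have h1 : ((q.val : ℤ) - q'.val : ℤ) = x + (N / d : ℕ) * k := by rw [hx]; ring
      have h2 : q - q' = (((q.val : ℤ) - q'.val : ℤ) : ZMod (N / d)) := by
        push_cast [ZMod.natCast_val, ZMod.cast_id]; ring
      rw [h2, h1]
      simp only [Int.cast_add, Int.cast_mul, Int.cast_natCast, ZMod.natCast_self, zero_mul,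
        add_zero]
    rcases (by have := abs_le.mp hxb; omega : x = 0 ∨ x = 1 ∨ x = -1) with h | h | h <;>
      rw [h] at hqq <;> simp at hqq
    · exact Or.inl hqq
    · exact Or.inr (Or.inl hqq)
    · exact Or.inr (Or.inr hqq)
end

section
/- Let Gr = (V,E) be a simple graph and let d ≥ 1 be an integer, and let Gr ⊠ K_d denote the strong product of Gr with the complete graph K_d on {0,…,d−1}. Then: (1) if Gr' = (V,E') satisfies E ⊆ E', then every edge of Gr ⊠ K_d is an edge of Gr' ⊠ K_d; (2) if Gr is chordal then Gr ⊠ K_d is chordal; and (3) every maximal clique of Gr ⊠ K_d is of the form C × {0,…,d−1} for some maximal clique C of Gr. -/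
open scoped Classical

/-- The strong product `Gr ⊠ K_d` of a graph `Gr` with the complete graph on
`{0,…,d−1}`: distinct vertices `(u,a)` and `(v,b)` are adjacent iff `u = v` or
`u` and `v` are adjacent in `Gr`. -/
def strongProdK {V : Type*} (Gr : SimpleGraph V) (d : ℕ) : SimpleGraph (V × Fin d) :=
  SimpleGraph.fromRel fun p q => p.1 = q.1 ∨ Gr.Adj p.1 q.1

section Aux

variable {V : Type*}

lemma strongProdK_adj {Gr : SimpleGraph V} {d : ℕ} {x y : V × Fin d} :
    (strongProdK Gr d).Adj x y ↔ x ≠ y ∧ (x.1 = y.1 ∨ Gr.Adj x.1 y.1) := by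
  rw [strongProdK, SimpleGraph.fromRel_adj]
  constructor
  · rintro ⟨hne, (h | h) | (h | h)⟩
    · exact ⟨hne, Or.inl h⟩
    · exact ⟨hne, Or.inr h⟩
    · exact ⟨hne, Or.inl h.symm⟩
    · exact ⟨hne, Or.inr h.symm⟩
  · rintro ⟨hne, h⟩
    exact ⟨hne, Or.inl h⟩

lemma closed_nodup_nil {G : SimpleGraph V} {x : V} (w : G.Walk x x)
    (hw : w.support.Nodup) : w.length = 0 := by
  cases w with
  | nil => rfl
  | cons h w' =>
    rw [SimpleGraph.Walk.support_cons, List.nodup_cons] at hw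
    exact absurd w'.end_mem_support hw.1

lemma edge_start_end_length {G : SimpleGraph V} {t p : V} (w : G.Walk t p)
    (hw : w.support.Nodup) (he : s(t, p) ∈ w.edges) : w.length = 1 := by
  cases w with
  | nil => simp at he
  | @cons _ s _ h w' =>
    rw [SimpleGraph.Walk.edges_cons, List.mem_cons] at he
    rw [SimpleGraph.Walk.support_cons, List.nodup_cons] at hw
    rcases he with he | he
    · rw [Sym2.eq_iff] at he
      rcases he with ⟨-, hps⟩ | ⟨hts, -⟩
      · subst hps
        simp [closed_nodup_nil w' hw.2]
      · exact absurd hts h.ne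
    · exact absurd (w'.fst_mem_support_of_mem_edges he) hw.1

lemma edge_end_getVert {G : SimpleGraph V} {s v : V} (w : G.Walk s v)
    (hw : w.support.Nodup) {a : V} (he : s(a, v) ∈ w.edges) :
    w.getVert (w.length - 1) = a := by
  induction w with
  | nil => simp at he
  | @cons x y z h w' ih =>
    rw [SimpleGraph.Walk.edges_cons, List.mem_cons] at he
    rw [SimpleGraph.Walk.support_cons, List.nodup_cons] at hw
    rcases he with he | he
    · rw [Sym2.eq_iff] at he
      rcases he with ⟨hax, hzy⟩ | ⟨hay, hzx⟩
      · subst hax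
        subst hzy
        have h0 := closed_nodup_nil w' hw.2
        simp [SimpleGraph.Walk.length_cons, h0]
      · exact absurd (hzx ▸ w'.end_mem_support) hw.1
    · have hne : w'.length ≠ 0 := by
        intro h0
        have h1 : w'.edges.length = 0 := by rw [SimpleGraph.Walk.length_edges, h0]
        rw [List.length_eq_zero_iff] at h1
        rw [h1] at he
        exact absurd he List.not_mem_nil
      obtain ⟨m, hm⟩ := Nat.exists_eq_succ_of_ne_zero hne
      have := ih hw.2 he
      rw [SimpleGraph.Walk.length_cons, hm]
      simpa [SimpleGraph.Walk.getVert_cons_succ, hm] using this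

lemma list_rev_tail_nodup {α : Type*} (v : α) (T : List α) (hT : T.Nodup)
    (hTd : T.dropLast ++ [v] = T) : ((v :: T).reverse.tail).Nodup := by
  have h1 : (v :: T).reverse = v :: (T.dropLast.reverse ++ [v]) := by
    conv_lhs => rw [← hTd]
    simp
  rw [h1, List.tail_cons]
  have h2 : (T.dropLast ++ [v]).Nodup := hTd.symm ▸ hT
  rw [List.nodup_append] at h2
  rw [List.nodup_append, List.nodup_reverse]
  exact ⟨h2.1, h2.2.1, fun a ha b hb => h2.2.2 a (List.mem_reverse.mp ha) b hb⟩

lemma support_dropLast_concat {G : SimpleGraph V} {u v : V} (c : G.Walk u v) :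
    c.support.dropLast ++ [v] = c.support := by
  rw [← SimpleGraph.Walk.map_fst_darts]
  exact SimpleGraph.Walk.map_fst_darts_append c

lemma end_mem_support_tail {G : SimpleGraph V} {v : V} (c : G.Walk v v)
    (hne : c ≠ SimpleGraph.Walk.nil) : v ∈ c.support.tail := by
  cases c with
  | nil => exact absurd rfl hne
  | cons h w => simpa [SimpleGraph.Walk.support_cons] using w.end_mem_support

lemma mem_support_iff_tail {G : SimpleGraph V} {v : V} (c : G.Walk v v)
    (hne : c ≠ SimpleGraph.Walk.nil) (x : V) : x ∈ c.support ↔ x ∈ c.support.tail := by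
  constructor
  · intro hx
    rw [c.support_eq_cons, List.mem_cons] at hx
    rcases hx with rfl | hx
    · exact end_mem_support_tail c hne
    · exact hx
  · intro hx
    rw [c.support_eq_cons]
    exact List.mem_cons_of_mem _ hx

lemma isCycle_reverse {G : SimpleGraph V} {v : V} {c : G.Walk v v} (hc : c.IsCycle) :
    c.reverse.IsCycle := by
  rw [SimpleGraph.Walk.isCycle_def] at hc ⊢
  obtain ⟨ht, hne, hnd⟩ := hc
  refine ⟨SimpleGraph.Walk.IsTrail.reverse _ ht,
    fun h => hne (by rw [← SimpleGraph.Walk.reverse_reverse c, h, SimpleGraph.Walk.reverse_nil]),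
    ?_⟩
  rw [SimpleGraph.Walk.support_reverse]
  cases hcc : c with
  | nil => exact absurd hcc hne
  | @cons _ s _ h w =>
    have hsup : c.support = v :: w.support := by rw [hcc, SimpleGraph.Walk.support_cons]
    have hTd : w.support.dropLast ++ [v] = w.support := support_dropLast_concat w
    have hnd' : w.support.Nodup := by
      rw [hsup, List.tail_cons] at hnd
      exact hnd
    rw [SimpleGraph.Walk.support_cons]
    exact list_rev_tail_nodup v _ hnd' hTd

/-- If `s(x,y)` is an edge of a cycle based at `x` and `y` is not the second vertex,
then `y` is the second vertex of the reversed cycle. -/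
lemma second_or_last {G : SimpleGraph V} {x y : V} (c : G.Walk x x) (hc : c.IsCycle)
    (hy : s(x, y) ∈ c.edges) (hne : y ≠ c.getVert 1) : c.reverse.getVert 1 = y := by
  cases c with
  | nil => simp at hy
  | @cons _ s _ h₁ w =>
    rw [SimpleGraph.Walk.edges_cons, List.mem_cons] at hy
    have hgv1 : (SimpleGraph.Walk.cons h₁ w).getVert 1 = s := by
      rw [SimpleGraph.Walk.getVert_cons_succ, SimpleGraph.Walk.getVert_zero]
    rcases hy with hy | hy
    · rw [Sym2.eq_iff] at hy
      rcases hy with ⟨-, hys⟩ | ⟨hxs, -⟩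
      · exact absurd (hys.trans hgv1.symm) hne
      · exact absurd hxs h₁.ne
    · have hnd : w.support.Nodup := by
        have := hc.support_nodup
        rwa [SimpleGraph.Walk.support_cons, List.tail_cons] at this
      have hy' : s(y, x) ∈ w.edges := by rwa [Sym2.eq_swap] at hy
      have hgv := edge_end_getVert w hnd hy'
      have hw1 : w.length ≠ 0 := by
        intro h0
        have h1 : w.edges.length = 0 := by rw [SimpleGraph.Walk.length_edges, h0]
        rw [List.length_eq_zero_iff] at h1
        rw [h1] at hy'
        exact absurd hy' List.not_mem_nil
      obtain ⟨m, hm⟩ := Nat.exists_eq_succ_of_ne_zero hw1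
      rw [SimpleGraph.Walk.getVert_reverse]
      have hlc : (SimpleGraph.Walk.cons h₁ w).length - 1 = m + 1 := by
        rw [SimpleGraph.Walk.length_cons, hm]
        omega
      rw [hlc, SimpleGraph.Walk.getVert_cons_succ]
      rw [hm] at hgv
      simpa using hgv

/-- Projection of a walk in the strong product to the base graph, assuming the first
coordinate is injective on the support. -/
lemma proj_walk {Gr : SimpleGraph V} {d : ℕ} {a b : V × Fin d}
    (w : (strongProdK Gr d).Walk a b) :
    (∀ x ∈ w.support, ∀ y ∈ w.support, x.1 = y.1 → x = y) →
    ∃ w' : Gr.Walk a.1 b.1, w'.support = w.support.map Prod.fst ∧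
      w'.edges = w.edges.map (Sym2.map Prod.fst) ∧ w'.length = w.length := by
  induction w with
  | nil => exact fun _ => ⟨SimpleGraph.Walk.nil, by simp⟩
  | @cons p m q h w ih =>
    intro hinj
    have hm : m ∈ (SimpleGraph.Walk.cons h w).support := by
      rw [SimpleGraph.Walk.support_cons]
      exact List.mem_cons_of_mem _ w.start_mem_support
    have hadj : Gr.Adj p.1 m.1 := by
      have h' := strongProdK_adj.mp h
      rcases h'.2 with he | he
      · exact absurd (hinj p (SimpleGraph.Walk.start_mem_support _) m hm he) h'.1
      · exact he
    obtain ⟨w', h1, h2, h3⟩ := ih (fun x hx y hy hxy =>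
      hinj x (by rw [SimpleGraph.Walk.support_cons]; exact List.mem_cons_of_mem _ hx)
        y (by rw [SimpleGraph.Walk.support_cons]; exact List.mem_cons_of_mem _ hy) hxy)
    refine ⟨SimpleGraph.Walk.cons hadj w', ?_, ?_, ?_⟩
    · rw [SimpleGraph.Walk.support_cons, SimpleGraph.Walk.support_cons, h1, List.map_cons]
    · rw [SimpleGraph.Walk.edges_cons, SimpleGraph.Walk.edges_cons, h2, List.map_cons,
        Sym2.map_pair_eq]
    · rw [SimpleGraph.Walk.length_cons, SimpleGraph.Walk.length_cons, h3]

/-- Key step: a cycle of length ≥ 4 in the strong product whose second vertex has the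
same first coordinate as the base point yields a contradiction, if every adjacent pair
of support vertices is an edge of the cycle. -/
lemma key_lemma {Gr : SimpleGraph V} {d : ℕ} {p : V × Fin d}
    (c : (strongProdK Gr d).Walk p p) (hc : c.IsCycle) (hlen : 4 ≤ c.length)
    (hq : (c.getVert 1).1 = p.1)
    (hcon : ∀ x y, x ∈ c.support → y ∈ c.support → (strongProdK Gr d).Adj x y →
      s(x, y) ∈ c.edges) : False := by
  cases c with
  | nil => simp at hlen
  | @cons _ q _ h₁ w =>
    cases w with
    | nil => exact h₁.ne (by simpa using hlen.trans_eq' (by simp) |>.elim)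
    | @cons _ t _ h₂ c'' =>
      have hq1 : q.1 = p.1 := by
        rw [SimpleGraph.Walk.getVert_cons_succ, SimpleGraph.Walk.getVert_zero] at hq
        exact hq
      have hnodup := hc.support_nodup
      rw [SimpleGraph.Walk.support_cons, SimpleGraph.Walk.support_cons, List.tail_cons,
        List.nodup_cons] at hnodup
      have hnodup'' : c''.support.Nodup := hnodup.2
      have hed := hc.isCircuit.isTrail.edges_nodup
      rw [SimpleGraph.Walk.edges_cons, SimpleGraph.Walk.edges_cons, List.nodup_cons] at hed
      have htp : t ≠ p := by
        intro h
        subst h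
        exact hed.1 (by rw [Sym2.eq_swap]; exact List.mem_cons_self)
      have h₂' := strongProdK_adj.mp h₂
      have hadj : (strongProdK Gr d).Adj p t := by
        rw [strongProdK_adj]
        refine ⟨fun h => htp h.symm, ?_⟩
        rcases h₂'.2 with h | h
        · exact Or.inl (by rw [← hq1, h])
        · exact Or.inr (by rw [← hq1]; exact h)
      have htmem : t ∈ (SimpleGraph.Walk.cons h₁ (SimpleGraph.Walk.cons h₂ c'')).support := by
        rw [SimpleGraph.Walk.support_cons, SimpleGraph.Walk.support_cons]
        exact List.mem_cons_of_mem _ (List.mem_cons_of_mem _ c''.start_mem_support)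
      have hmem := hcon p t (SimpleGraph.Walk.start_mem_support _) htmem hadj
      rw [SimpleGraph.Walk.edges_cons, SimpleGraph.Walk.edges_cons, List.mem_cons,
        List.mem_cons] at hmem
      rcases hmem with hmem | hmem | hmem
      · rw [Sym2.eq_iff] at hmem
        rcases hmem with ⟨-, htq⟩ | ⟨hpq, -⟩
        · exact h₂.ne htq.symm
        · exact h₁.ne hpq
      · rw [Sym2.eq_iff] at hmem
        rcases hmem with ⟨hpq, -⟩ | ⟨hpt, -⟩
        · exact h₁.ne hpq
        · exact htp hpt.symm
      · have hl1 := edge_start_end_length c'' hnodup''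
          (by rwa [Sym2.eq_swap] at hmem)
        rw [SimpleGraph.Walk.length_cons, SimpleGraph.Walk.length_cons, hl1] at hlen
        omega

end Aux

/-- **Proposition 8: properties of the strong product with a complete graph.**
(1) The strong product is monotone: if `Gr ≤ Gr'` then `Gr ⊠ K_d ≤ Gr' ⊠ K_d`.
(2) If `Gr` is chordal then so is `Gr ⊠ K_d`.
(3) Every maximal clique of `Gr ⊠ K_d` is of the form `C × {0,…,d−1}` for some maximal
clique `C` of `Gr`. -/
theorem strong_product_complete_props
    {V : Type*} (Gr : SimpleGraph V) (d : ℕ) (hd : 1 ≤ d) :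
    (∀ Gr' : SimpleGraph V, Gr ≤ Gr' → strongProdK Gr d ≤ strongProdK Gr' d) ∧
    (IsChordal Gr → IsChordal (strongProdK Gr d)) ∧
    (∀ C : Set (V × Fin d), (strongProdK Gr d).IsClique C →
      (∀ C', (strongProdK Gr d).IsClique C' → C ⊆ C' → C' = C) →
      ∃ C₀ : Set V, Gr.IsClique C₀ ∧
        (∀ C₀', Gr.IsClique C₀' → C₀ ⊆ C₀' → C₀' = C₀) ∧
        C = C₀ ×ˢ (Set.univ : Set (Fin d))) := by
  refine ⟨?_, ?_, ?_⟩
  · -- (1) monotonicity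
    intro Gr' hle x y hxy
    rw [strongProdK_adj] at hxy ⊢
    exact ⟨hxy.1, hxy.2.imp id (fun h => hle h)⟩
  · -- (2) chordality
    intro hch u c hc hlen
    by_contra hcontra
    push_neg at hcontra
    have hcon : ∀ x y, x ∈ c.support → y ∈ c.support → (strongProdK Gr d).Adj x y →
        s(x, y) ∈ c.edges := fun x y hx hy hadj => hcontra x y hx hy hadj
    by_cases hinj : ∀ x ∈ c.support, ∀ y ∈ c.support, x.1 = y.1 → x = y
    · -- projection case
      obtain ⟨w', hsup, hedg, hlen'⟩ := proj_walk c hinj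
      have hcyc : w'.IsCycle := by
        rw [SimpleGraph.Walk.isCycle_def]
        refine ⟨⟨?_⟩, ?_, ?_⟩
        · rw [hedg]
          refine (hc.isCircuit.isTrail.edges_nodup).map_on ?_
          intro e₁ h₁ e₂ h₂
          revert h₁ h₂
          induction e₁ using Sym2.ind with
          | _ a b =>
            induction e₂ using Sym2.ind with
            | _ x y =>
              intro h₁ h₂ heq
              rw [Sym2.map_pair_eq, Sym2.map_pair_eq, Sym2.eq_iff] at heq
              have ha := c.fst_mem_support_of_mem_edges h₁
              have hb := c.snd_mem_support_of_mem_edges h₁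
              have hx := c.fst_mem_support_of_mem_edges h₂
              have hy := c.snd_mem_support_of_mem_edges h₂
              rcases heq with ⟨e1, e2⟩ | ⟨e1, e2⟩
              · rw [hinj a ha x hx e1, hinj b hb y hy e2]
              · rw [hinj a ha y hy e1, hinj b hb x hx e2, Sym2.eq_swap]
        · intro h
          rw [h] at hlen'
          simp at hlen'
          omega
        · rw [hsup, ← List.map_tail]
          exact hc.support_nodup.map_on (fun x hx y hy h =>
            hinj x (List.mem_of_mem_tail hx) y (List.mem_of_mem_tail hy) h)
      obtain ⟨x, y, hx, hy, hadj, hne⟩ := hch w' hcyc (by omega)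
      rw [hsup] at hx hy
      obtain ⟨px, hpx, rfl⟩ := List.mem_map.mp hx
      obtain ⟨py, hpy, rfl⟩ := List.mem_map.mp hy
      have hpadj : (strongProdK Gr d).Adj px py := by
        rw [strongProdK_adj]
        exact ⟨fun h => hadj.ne (by rw [h]), Or.inr hadj⟩
      have := hcon px py hpx hpy hpadj
      apply hne
      rw [hedg]
      have : Sym2.map Prod.fst s(px, py) ∈ c.edges.map (Sym2.map Prod.fst) :=
        List.mem_map_of_mem this
      rwa [Sym2.map_pair_eq] at this
    · -- non-injective case
      push_neg at hinj
      obtain ⟨x, hx, y, hy, hxy1, hxyne⟩ := hinj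
      have hcnil : c ≠ SimpleGraph.Walk.nil := hc.ne_nil
      have hedge : s(x, y) ∈ c.edges :=
        hcon x y hx hy (strongProdK_adj.mpr ⟨hxyne, Or.inl hxy1⟩)
      have main : ∀ (c₁ : (strongProdK Gr d).Walk x x), c₁.IsCycle →
          c₁.length = c.length → (∀ e, e ∈ c₁.edges ↔ e ∈ c.edges) →
          (∀ z, z ∈ c₁.support ↔ z ∈ c.support) → c₁.getVert 1 = y → False := by
        intro c₁ hc₁ hlen₁ hE hS hgv
        exact key_lemma c₁ hc₁ (by omega)
          (by rw [hgv]; exact hxy1.symm)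
          (fun a b ha hb hadj => (hE _).mpr (hcon a b ((hS a).mp ha) ((hS b).mp hb) hadj))
      set c₁ := c.rotate x hx with hc₁def
      have hc₁ : c₁.IsCycle := hc.rotate hx
      have hc₁nil : c₁ ≠ SimpleGraph.Walk.nil := hc₁.ne_nil
      have hlen₁ : c₁.length = c.length := by
        rw [← SimpleGraph.Walk.length_edges, ← SimpleGraph.Walk.length_edges]
        exact (c.rotate_edges x hx).perm.length_eq
      have hE : ∀ e, e ∈ c₁.edges ↔ e ∈ c.edges := fun e => (c.rotate_edges x hx).perm.mem_iff
      have hS : ∀ z, z ∈ c₁.support ↔ z ∈ c.support := by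
        intro z
        rw [mem_support_iff_tail c₁ hc₁nil, mem_support_iff_tail c hcnil]
        exact (c.support_rotate x hx).perm.mem_iff
      have hy₁ : s(x, y) ∈ c₁.edges := (hE _).mpr hedge
      rcases eq_or_ne y (c₁.getVert 1) with h | h
      · exact main c₁ hc₁ hlen₁ hE hS h.symm
      · have h2 := second_or_last c₁ hc₁ hy₁ h
        exact main c₁.reverse (isCycle_reverse hc₁)
          (by rw [SimpleGraph.Walk.length_reverse]; exact hlen₁)
          (fun e => by rw [SimpleGraph.Walk.edges_reverse, List.mem_reverse]; exact hE e)
          (fun z => by rw [SimpleGraph.Walk.support_reverse, List.mem_reverse]; exact hS z)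
          h2
  · -- (3) maximal cliques
    intro C hC hmax
    have hclique : Gr.IsClique (Prod.fst '' C) := by
      rintro x ⟨p, hp, rfl⟩ y ⟨q, hq, rfl⟩ hne
      have hpq : p ≠ q := fun h => hne (by rw [h])
      have := strongProdK_adj.mp (hC hp hq hpq)
      rcases this.2 with h | h
      · exact absurd h hne
      · exact h
    have hprodclique : ∀ (S : Set V), Gr.IsClique S →
        (strongProdK Gr d).IsClique (S ×ˢ (Set.univ : Set (Fin d))) := by
      rintro S hS ⟨a, i⟩ ⟨ha, -⟩ ⟨b, j⟩ ⟨hb, -⟩ hne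
      rw [strongProdK_adj]
      refine ⟨hne, ?_⟩
      rcases eq_or_ne a b with rfl | h
      · exact Or.inl rfl
      · exact Or.inr (hS ha hb h)
    have hCsub : C ⊆ (Prod.fst '' C) ×ˢ (Set.univ : Set (Fin d)) :=
      fun p hp => Set.mem_prod.mpr ⟨⟨p, hp, rfl⟩, trivial⟩
    have heq : C = (Prod.fst '' C) ×ˢ (Set.univ : Set (Fin d)) :=
      (hmax _ (hprodclique _ hclique) hCsub).symm
    refine ⟨Prod.fst '' C, hclique, ?_, heq⟩
    intro C₀' hC₀' hsub
    have h2 : C ⊆ C₀' ×ˢ (Set.univ : Set (Fin d)) := by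
      rw [heq]
      exact Set.prod_mono hsub (le_refl _)
    have h3 : C₀' ×ˢ (Set.univ : Set (Fin d)) = C := hmax _ (hprodclique _ hC₀') h2
    refine Set.Subset.antisymm ?_ hsub
    intro x hx
    have : (x, (⟨0, hd⟩ : Fin d)) ∈ C := by
      rw [← h3]
      exact Set.mem_prod.mpr ⟨hx, trivial⟩
    exact ⟨(x, ⟨0, hd⟩), this, rfl⟩
end

section
/- Let N and d be positive integers with d dividing N. Suppose the cycle graph C_{N/d} on ℤ_{N/d} admits a chordal cover with frequencies T ⊆ ℤ_{N/d}, i.e. a chordal graph Γ on ℤ_{N/d} containing all edges of C_{N/d} such that every maximal clique C of Γ has a translate k_C + C ⊆ T for some k_C ∈ ℤ_{N/d}. Then the d-th power C_N^d of the cycle graph on ℤ_N admits a chordal cover with frequencies T' := { k·d + r ∈ ℤ_N : k ∈ T, r ∈ {0,…,d−1} } (where k·d is computed from any integer lift of k), i.e. a chordal graph Γ' on ℤ_N containing all edges of C_N^d such that every maximal clique C' of Γ' has a translate t + C' ⊆ T' for some t ∈ ℤ_N. Moreover |T'| ≤ d·|T|. -/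
open scoped Classical

namespace CPT

open SimpleGraph Walk

variable {V W : Type*}

/-- The blow-up of a graph `Γ` along a map `π`: vertices in the same fiber are all adjacent,
and vertices in different fibers are adjacent iff their images are adjacent. -/
@[reducible] def blowup (π : V → W) (Γ : SimpleGraph W) : SimpleGraph V where
  Adj x y := x ≠ y ∧ (π x = π y ∨ Γ.Adj (π x) (π y))
  symm := ⟨by
    rintro x y ⟨h1, h2⟩
    exact ⟨h1.symm, h2.elim (fun h' => Or.inl h'.symm) fun h' => Or.inr h'.symm⟩⟩
  loopless := ⟨fun x h => h.1 rfl⟩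

lemma closed_nodup_length {G : SimpleGraph V} {a : V} (q : G.Walk a a)
    (h : q.support.Nodup) : q.length = 0 := by
  cases q with
  | nil => rfl
  | cons h' q' =>
    exfalso
    rw [Walk.support_cons, List.nodup_cons] at h
    exact h.1 q'.end_mem_support

lemma dart_fst_ne_end {G : SimpleGraph V} {a b : V} (p : G.Walk a b)
    (hnd : p.support.Nodup) {D : G.Dart} (hD : D ∈ p.darts) : D.fst ≠ b := by
  induction p with
  | nil => simp at hD
  | cons h q ih =>
    rw [Walk.support_cons, List.nodup_cons] at hnd
    rw [Walk.darts_cons, List.mem_cons] at hD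
    rcases hD with rfl | hD
    · intro hab
      exact hnd.1 (hab ▸ q.end_mem_support)
    · exact ih hnd.2 hD

lemma no_edge_start_end {G : SimpleGraph V} {x v : V} (q : G.Walk x v)
    (hnd : q.support.Nodup) (h2 : 2 ≤ q.length) : s(x, v) ∉ q.edges := by
  cases q with
  | nil => simp
  | cons h q' =>
    rw [Walk.support_cons, List.nodup_cons] at hnd
    rw [Walk.edges_cons, List.mem_cons]
    rintro (hm | hm)
    · rw [Sym2.eq_iff] at hm
      rcases hm with ⟨-, rfl⟩ | ⟨rfl, rfl⟩
      · have := closed_nodup_length q' hnd.2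
        simp only [Walk.length_cons] at h2
        omega
      · exact h.ne rfl
    · exact hnd.1 (q'.fst_mem_support_of_mem_edges hm)

lemma end_mem_tail {G : SimpleGraph V} {u : V} (c : G.Walk u u) (hn : ¬c.Nil) (x : V) :
    x ∈ c.support ↔ x ∈ c.support.tail := by
  cases c with
  | nil => simp at hn
  | cons h p =>
    rw [Walk.support_cons, List.tail_cons, List.mem_cons]
    exact ⟨fun hx => hx.elim (fun h' => h' ▸ p.end_mem_support) id, Or.inr⟩

section CaseA

variable {π : V → W} {Γ : SimpleGraph W}

lemma blowup_caseA {v w : V}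
    (h1 : (blowup π Γ).Adj v w) (p : (blowup π Γ).Walk w v)
    (hc : (Walk.cons h1 p).IsCycle) (h4 : 4 ≤ (Walk.cons h1 p).length)
    (hπ : π v = π w)
    (hch : ∀ a b, a ∈ (Walk.cons h1 p).support → b ∈ (Walk.cons h1 p).support →
      (blowup π Γ).Adj a b → s(a, b) ∈ (Walk.cons h1 p).edges) : False := by
  cases p with
  | nil => simp at h4
  | @cons _ x _ h2 q =>
    have hnd : (w :: q.support).Nodup := by
      have := hc.support_nodup
      simpa using this
    rw [List.nodup_cons] at hnd
    have hxq : x ∈ q.support := q.start_mem_support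
    have hvq : v ∈ q.support := q.end_mem_support
    have hxv : x ≠ v := by
      rintro rfl
      have := closed_nodup_length q hnd.2
      simp only [Walk.length_cons] at h4
      omega
    have hq2 : 2 ≤ q.length := by
      simp only [Walk.length_cons] at h4; omega
    have hadj : (blowup π Γ).Adj v x := by
      refine ⟨fun h => hxv h.symm, ?_⟩
      rcases h2.2 with h' | h'
      · exact Or.inl (hπ.trans h')
      · exact Or.inr (hπ ▸ h')
    have hmem := hch v x (Walk.start_mem_support _)
      (by simp [Walk.support_cons]) hadj
    rw [Walk.edges_cons, Walk.edges_cons, List.mem_cons, List.mem_cons] at hmem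
    rcases hmem with hm | hm | hm
    · rw [Sym2.eq_iff] at hm
      rcases hm with ⟨-, rfl⟩ | ⟨rfl, -⟩
      · exact hnd.1 hxq
      · exact h1.ne rfl
    · rw [Sym2.eq_iff] at hm
      rcases hm with ⟨rfl, -⟩ | ⟨rfl, rfl⟩
      · exact h1.ne rfl
      · exact hxv rfl
    · rw [Sym2.eq_swap] at hm
      exact no_edge_start_end q hnd.2 hq2 hm

lemma blowup_caseA' {v : V}
    (c : (blowup π Γ).Walk v v) (hc : c.IsCycle) (h4 : 4 ≤ c.length)
    (hch : ∀ a b, a ∈ c.support → b ∈ c.support →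
      (blowup π Γ).Adj a b → s(a, b) ∈ c.edges)
    {D : (blowup π Γ).Dart} (hD : D ∈ c.darts) (hfst : D.fst = v)
    (hπ : π D.fst = π D.snd) : False := by
  cases c with
  | nil => simp at hD
  | @cons _ w _ h1 p =>
    rw [Walk.darts_cons, List.mem_cons] at hD
    rcases hD with rfl | hD
    · exact blowup_caseA h1 p hc h4 hπ hch
    · have hnd : p.support.Nodup := by
        have := hc.support_nodup
        simpa using this
      exact dart_fst_ne_end p hnd hD hfst

end CaseA

section Chordal

variable {π : V → W} {Γ : SimpleGraph W}

lemma blowup_project {a b : V} (p : (blowup π Γ).Walk a b)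
    (hp : ∀ x y, s(x, y) ∈ p.edges → π x ≠ π y) :
    ∃ q : Γ.Walk (π a) (π b), q.support = p.support.map π ∧
      q.edges = p.edges.map (Sym2.map π) := by
  induction p with
  | nil => exact ⟨Walk.nil, by simp, by simp⟩
  | @cons u u' _ h p' ih =>
    have hne : π u ≠ π u' := hp u u' (by simp)
    have hadj : Γ.Adj (π u) (π u') := h.2.resolve_left hne
    obtain ⟨q', hs, he⟩ := ih fun x y hxy => hp x y (by simp [hxy])
    exact ⟨Walk.cons hadj q', by simp [hs], by simp [he, Sym2.map_pair_eq]⟩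

theorem blowup_chordal (π : V → W) (Γ : SimpleGraph W) (hΓ : IsChordal Γ) :
    IsChordal (blowup π Γ) := by
  intro u c hc h4
  by_contra hcon
  push_neg at hcon
  by_cases hA : ∃ D : (blowup π Γ).Dart, D ∈ c.darts ∧ π D.fst = π D.snd
  · obtain ⟨D, hD, hπD⟩ := hA
    have hv : D.fst ∈ c.support := c.dart_fst_mem_support_of_mem_darts hD
    have hlen : (c.rotate _ hv).length = c.length := by
      have := (c.rotate_darts _ hv).perm.length_eq
      rwa [Walk.length_darts, Walk.length_darts] at this
    have hn : ¬c.Nil := by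
      rw [Walk.not_nil_iff_lt_length]; omega
    have hn' : ¬(c.rotate _ hv).Nil := by
      rw [Walk.not_nil_iff_lt_length]; omega
    have hsup : ∀ x, x ∈ (c.rotate _ hv).support ↔ x ∈ c.support := by
      intro x
      rw [end_mem_tail _ hn', end_mem_tail _ hn, (c.support_rotate _ hv).mem_iff]
    have hedg : ∀ e, e ∈ (c.rotate _ hv).edges ↔ e ∈ c.edges :=
      fun e => (c.rotate_edges _ hv).perm.mem_iff
    refine blowup_caseA' (c.rotate _ hv) (hc.rotate hv) (by omega) ?_
      ((c.rotate_darts _ hv).mem_iff.mpr hD) rfl hπD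
    intro a b ha hb hadj
    exact (hedg _).mpr (hcon a b ((hsup a).mp ha) ((hsup b).mp hb) hadj)
  · push_neg at hA
    have hB : ∀ x y, s(x, y) ∈ c.edges → π x ≠ π y := by
      intro x y hxy
      obtain ⟨D, hD, hDe⟩ := List.mem_map.mp hxy
      have : s(D.fst, D.snd) = s(x, y) := hDe
      rw [Sym2.eq_iff] at this
      rcases this with ⟨h1, h2⟩ | ⟨h1, h2⟩
      · exact h1 ▸ h2 ▸ hA D hD
      · intro h'
        exact hA D hD (h1 ▸ h2 ▸ h'.symm)
    obtain ⟨q, hqs, hqe⟩ := blowup_project c hB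
    have hinj : ∀ x ∈ c.support, ∀ y ∈ c.support, π x = π y → x = y := by
      intro x hx y hy hxy
      by_contra hne
      exact hB x y (hcon x y hx hy ⟨hne, Or.inl hxy⟩) hxy
    have hqlen : q.length = c.length := by
      rw [← Walk.length_edges, ← Walk.length_edges, hqe, List.length_map]
    have hqc : q.IsCycle := by
      rw [Walk.isCycle_def]
      refine ⟨⟨?_⟩, ?_, ?_⟩
      · rw [hqe]
        refine List.Nodup.map_on ?_ hc.isCircuit.isTrail.edges_nodup
        intro e1 he1 e2 he2 hmap
        induction e1 with
        | h x1 y1 =>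
          induction e2 with
          | h x2 y2 =>
            rw [Sym2.map_pair_eq, Sym2.map_pair_eq, Sym2.eq_iff] at hmap
            have hx1 := c.fst_mem_support_of_mem_edges he1
            have hy1 := c.snd_mem_support_of_mem_edges he1
            have hx2 := c.fst_mem_support_of_mem_edges he2
            have hy2 := c.snd_mem_support_of_mem_edges he2
            rcases hmap with ⟨h1, h2⟩ | ⟨h1, h2⟩
            · rw [hinj x1 hx1 x2 hx2 h1, hinj y1 hy1 y2 hy2 h2]
            · rw [hinj x1 hx1 y2 hy2 h1, hinj y1 hy1 x2 hx2 h2, Sym2.eq_swap]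
      · intro hqnil
        have : q.length = 0 := by rw [hqnil]; rfl
        omega
      · have hts : q.support.tail = c.support.tail.map π := by
          rw [hqs]
          cases c with
          | nil => simp at h4
          | cons h p => simp [Walk.support_cons]
        rw [hts]
        refine List.Nodup.map_on ?_ hc.support_nodup
        intro x hx y hy
        exact hinj x (List.mem_of_mem_tail hx) y (List.mem_of_mem_tail hy)
    obtain ⟨α, β, hα, hβ, hadj, hne⟩ := hΓ q hqc (by omega)
    rw [hqs] at hα hβ
    obtain ⟨x, hx, rfl⟩ := List.mem_map.mp hα
    obtain ⟨y, hy, rfl⟩ := List.mem_map.mp hβ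
    have hxy : x ≠ y := fun h => hadj.ne (h ▸ rfl)
    have hmem := hcon x y hx hy ⟨hxy, Or.inr hadj⟩
    apply hne
    rw [hqe]
    exact List.mem_map.mpr ⟨s(x, y), hmem, by rw [Sym2.map_pair_eq]⟩

end Chordal

section Cliques

variable {π : V → W} {Γ : SimpleGraph W}

lemma blowup_clique_image {C : Set V} (hC : (blowup π Γ).IsClique C) :
    Γ.IsClique (π '' C) := by
  rintro _ ⟨x, hx, rfl⟩ _ ⟨y, hy, rfl⟩ hne
  have hxy : x ≠ y := fun h => hne (h ▸ rfl)
  exact (hC hx hy hxy).2.resolve_left hne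

lemma blowup_clique_preimage {S : Set W} (hS : Γ.IsClique S) :
    (blowup π Γ).IsClique (π ⁻¹' S) := by
  intro x hx y hy hne
  refine ⟨hne, ?_⟩
  by_cases h : π x = π y
  · exact Or.inl h
  · exact Or.inr (hS hx hy h)

lemma blowup_maxclique (hπ : Function.Surjective π) {C : Set V}
    (hC : (blowup π Γ).IsClique C)
    (hmax : ∀ C', (blowup π Γ).IsClique C' → C ⊆ C' → C' = C) :
    Γ.IsClique (π '' C) ∧ ∀ S', Γ.IsClique S' → π '' C ⊆ S' → S' = π '' C := by
  refine ⟨blowup_clique_image hC, fun S' hS' hsub => ?_⟩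
  have hD := hmax (π ⁻¹' S') (blowup_clique_preimage hS') fun x hx => hsub ⟨x, hx, rfl⟩
  apply Set.Subset.antisymm
  · intro s hs
    obtain ⟨x, rfl⟩ := hπ s
    have : x ∈ π ⁻¹' S' := hs
    rw [hD] at this
    exact ⟨x, this, rfl⟩
  · exact hsub

lemma exists_maximal_clique {G : SimpleGraph V} {C₀ : Set V} (h : G.IsClique C₀) :
    ∃ S, C₀ ⊆ S ∧ G.IsClique S ∧ ∀ C', G.IsClique C' → S ⊆ C' → C' = S := by
  have hH : ∀ c ⊆ {C | G.IsClique C}, IsChain (· ⊆ ·) c → c.Nonempty →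
      ∃ ub ∈ {C | G.IsClique C}, ∀ s ∈ c, s ⊆ ub := by
    intro c hcS hchain hcne
    refine ⟨⋃₀ c, ?_, fun s hs => Set.subset_sUnion_of_mem hs⟩
    rintro x ⟨s1, hs1, hx1⟩ y ⟨s2, hs2, hy2⟩ hne
    rcases hchain.total hs1 hs2 with h12 | h21
    · exact hcS hs2 (h12 hx1) hy2 hne
    · exact hcS hs1 hx1 (h21 hy2) hne
  obtain ⟨S, hsub, hmax⟩ := zorn_subset_nonempty {C | G.IsClique C} hH C₀ h
  exact ⟨S, hsub, hmax.prop,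
    fun C' hC' hsc => Set.Subset.antisymm (hmax.2 hC' hsc) hsc⟩

end Cliques

section PathZ

/-- The path graph on `ℤ`. -/
def PathZ : SimpleGraph ℤ := SimpleGraph.fromRel fun i j => i - j = 1

lemma pathz_adj {i j : ℤ} : PathZ.Adj i j ↔ i ≠ j ∧ (i - j = 1 ∨ j - i = 1) := by
  simp [PathZ, SimpleGraph.fromRel_adj]

lemma pathz_cross {x y : ℤ} (p : PathZ.Walk x y) (k : ℤ) (hx : k < x) (hy : y ≤ k) :
    s(k, k + 1) ∈ p.edges := by
  induction p with
  | nil => omega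
  | @cons a z _ h p' ih =>
    rw [pathz_adj] at h
    rw [Walk.edges_cons, List.mem_cons]
    by_cases hz : k < z
    · exact Or.inr (ih hz hy)
    · left
      have : a = k + 1 ∧ z = k := by omega
      rw [this.1, this.2, Sym2.eq_swap]

lemma pathz_no_cycle {u : ℤ} (c : PathZ.Walk u u) (hc : c.IsCycle) : False := by
  have h3 := hc.three_le_length
  have hn : ¬c.Nil := by rw [Walk.not_nil_iff_lt_length]; omega
  have hune : c.support.toFinset.Nonempty := ⟨u, by simp⟩
  set m := c.support.toFinset.min' hune with hmdef
  have hm : m ∈ c.support := List.mem_toFinset.mp (c.support.toFinset.min'_mem hune)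
  have hmin : ∀ x ∈ c.support, m ≤ x :=
    fun x hx => c.support.toFinset.min'_le x (List.mem_toFinset.mpr hx)
  have hc₁ : (c.rotate _ hm).IsCycle := hc.rotate hm
  have hlen : (c.rotate _ hm).length = c.length := by
    have := (c.rotate_darts _ hm).perm.length_eq
    rwa [Walk.length_darts, Walk.length_darts] at this
  have hn' : ¬(c.rotate _ hm).Nil := by rw [Walk.not_nil_iff_lt_length]; omega
  have hsup : ∀ x, x ∈ (c.rotate _ hm).support → x ∈ c.support := by
    intro x hx
    rw [end_mem_tail _ hn, ← (c.support_rotate _ hm).mem_iff, ← end_mem_tail _ hn']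
    exact hx
  obtain ⟨w, h1, p, hco⟩ := Walk.not_nil_iff.mp hn'
  have hwmem : w ∈ c.support := by
    apply hsup
    rw [hco, Walk.support_cons]
    exact List.mem_cons_of_mem _ p.start_mem_support
  have hadj := h1
  rw [pathz_adj] at hadj
  have hw : w = m + 1 := by
    have := hmin w hwmem
    omega
  have hcross : s(m, m + 1) ∈ p.edges := pathz_cross p m (by omega) le_rfl
  have hnd := hc₁.isCircuit.isTrail.edges_nodup
  rw [hco, Walk.edges_cons, List.nodup_cons] at hnd
  rw [← hw] at hcross
  exact hnd.1 hcross

lemma pathz_chordal : IsChordal PathZ :=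
  fun _ c hc _ => (pathz_no_cycle c hc).elim

lemma pathz_maxclique {S : Set ℤ} (hS : PathZ.IsClique S)
    (hmax : ∀ S', PathZ.IsClique S' → S ⊆ S' → S' = S) :
    ∃ a : ℤ, S = {a, a + 1} := by
  have hpair : ∀ a : ℤ, PathZ.IsClique {a, a + 1} := by
    intro a
    rw [SimpleGraph.isClique_pair]
    intro _
    rw [pathz_adj]
    omega
  have hS0 : S.Nonempty := by
    rw [Set.nonempty_iff_ne_empty]
    intro h
    have := hmax {0, 1} (hpair 0) (by rw [h]; exact Set.empty_subset _)
    rw [h] at this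
    exact (Set.eq_empty_iff_forall_notMem.mp this 0) (Or.inl rfl)
  obtain ⟨a₀, ha₀⟩ := hS0
  have hsub : ∀ x ∈ S, x = a₀ ∨ x = a₀ + 1 ∨ x = a₀ - 1 := by
    intro x hx
    by_cases hxa : x = a₀
    · exact Or.inl hxa
    · have := hS hx ha₀ hxa
      rw [pathz_adj] at this
      omega
  have hnot : ¬(a₀ + 1 ∈ S ∧ a₀ - 1 ∈ S) := by
    rintro ⟨h1, h2⟩
    have := hS h1 h2 (by omega)
    rw [pathz_adj] at this
    omega
  by_cases h1 : a₀ + 1 ∈ S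
  · refine ⟨a₀, Set.Subset.antisymm ?_ ?_⟩
    · intro x hx
      rcases hsub x hx with h | h | h
      · simp only [Set.mem_insert_iff, Set.mem_singleton_iff]; omega
      · simp only [Set.mem_insert_iff, Set.mem_singleton_iff]; omega
      · exfalso
        apply hnot
        refine ⟨h1, ?_⟩
        rwa [← h]
    · rintro x (rfl | rfl)
      · exact ha₀
      · exact h1
  · by_cases h2 : a₀ - 1 ∈ S
    · refine ⟨a₀ - 1, Set.Subset.antisymm ?_ ?_⟩
      · intro x hx
        rcases hsub x hx with h | h | h
        · simp only [Set.mem_insert_iff, Set.mem_singleton_iff]; omega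
        · exfalso; apply h1; rwa [← h]
        · simp only [Set.mem_insert_iff, Set.mem_singleton_iff]; omega
      · rintro x (rfl | hx)
        · exact h2
        · rw [Set.mem_singleton_iff] at hx
          have hxx : x = a₀ := by omega
          rwa [hxx]
    · exfalso
      have heq := hmax {a₀, a₀ + 1} (hpair a₀) ?_
      · rw [← heq] at h1
        exact h1 (Or.inr rfl)
      · intro x hx
        rcases hsub x hx with h | h | h
        · simp only [Set.mem_insert_iff, Set.mem_singleton_iff]; omega
        · exfalso; apply h1; rwa [← h]
        · exfalso; apply h2; rwa [← h]

end PathZ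

/-- The `N = 0` case of the main theorem, phrased over `ℤ = ZMod 0`. -/
theorem main_zero (d : ℕ) (hd : 0 < d) (T : Finset ℤ) (Γ : SimpleGraph ℤ)
    (hcover : (SimpleGraph.fromRel fun i j : ℤ => i - j = 1) ≤ Γ)
    (hfreq : ∀ C : Set ℤ, Γ.IsClique C →
      (∀ C', Γ.IsClique C' → C ⊆ C' → C' = C) →
      ∃ t : ℤ, (fun c => t + c) '' C ⊆ ↑T) :
    ∃ Γ' : SimpleGraph ℤ,
      IsChordal Γ' ∧
      (SimpleGraph.fromRel (fun i j : ℤ =>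
        ∃ m : ℕ, 1 ≤ m ∧ m ≤ d ∧ i - j = (m : ℤ)) ≤ Γ') ∧
      ∀ C : Set ℤ, Γ'.IsClique C →
        (∀ C', Γ'.IsClique C' → C ⊆ C' → C' = C) →
        ∃ t : ℤ, (fun c => t + c) '' C ⊆
          ↑((T ×ˢ Finset.range d).image (fun p => ((p.1.natAbs * d + p.2 : ℕ) : ℤ))) := by
  have hdz : (d : ℤ) ≠ 0 := by positivity
  have hdz' : (0 : ℤ) < d := by positivity
  set π0 : ℤ → ℤ := fun x => x / (d : ℤ) with hπ0
  have hsurj : Function.Surjective π0 := by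
    intro q
    exact ⟨q * d, Int.mul_ediv_cancel q hdz⟩
  refine ⟨blowup π0 PathZ, blowup_chordal π0 PathZ pathz_chordal, ?_, ?_⟩
  · intro i j hadj
    rw [SimpleGraph.fromRel_adj] at hadj
    obtain ⟨hne, hor⟩ := hadj
    have key : ∀ i j : ℤ, j ≤ i → i ≤ j + d → π0 i = π0 j ∨ PathZ.Adj (π0 i) (π0 j) := by
      intro i j hji hijd
      have h1 : j / (d : ℤ) ≤ i / (d : ℤ) := Int.ediv_le_ediv hdz' hji
      have h2 : i / (d : ℤ) ≤ j / (d : ℤ) + 1 := by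
        have := Int.ediv_le_ediv hdz' hijd
        rwa [show j + (d : ℤ) = j + 1 * d by ring, Int.add_mul_ediv_right j 1 hdz] at this
      simp only [hπ0]
      rcases eq_or_lt_of_le h1 with heq | hlt
      · exact Or.inl heq.symm
      · right
        rw [pathz_adj]
        constructor
        · omega
        · omega
    refine ⟨hne, ?_⟩
    rcases hor with ⟨m, hm1, hmd, hmeq⟩ | ⟨m, hm1, hmd, hmeq⟩
    · have : (1 : ℤ) ≤ m ∧ (m : ℤ) ≤ d := ⟨by exact_mod_cast hm1, by exact_mod_cast hmd⟩
      exact key i j (by omega) (by omega)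
    · have : (1 : ℤ) ≤ m ∧ (m : ℤ) ≤ d := ⟨by exact_mod_cast hm1, by exact_mod_cast hmd⟩
      rcases key j i (by omega) (by omega) with h | h
      · exact Or.inl h.symm
      · exact Or.inr h.symm
  · intro C hC hmax
    obtain ⟨hSc, hSm⟩ := blowup_maxclique hsurj hC hmax
    obtain ⟨a, hSa⟩ := pathz_maxclique hSc hSm
    have h01 : Γ.IsClique {(0 : ℤ), 1} := by
      rw [SimpleGraph.isClique_pair]
      intro _
      apply hcover
      rw [SimpleGraph.fromRel_adj]
      exact ⟨by omega, Or.inr (by ring)⟩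
    obtain ⟨S₀, hsub0, hS₀c, hS₀m⟩ := exists_maximal_clique h01
    obtain ⟨t, ht⟩ := hfreq S₀ hS₀c hS₀m
    have hk1 : t ∈ T := by
      have := ht ⟨0, hsub0 (Or.inl rfl), rfl⟩
      simpa using this
    have hk2 : t + 1 ∈ T := ht ⟨1, hsub0 (Or.inr rfl), rfl⟩
    have hblock : ∀ x ∈ C, ∃ s r : ℤ, (s = a ∨ s = a + 1) ∧ 0 ≤ r ∧ r < d ∧
        x = s * d + r := by
      intro x hx
      have hπx : π0 x ∈ ({a, a + 1} : Set ℤ) := by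
        rw [← hSa]
        exact ⟨x, hx, rfl⟩
      refine ⟨x / d, x % d, ?_, Int.emod_nonneg x hdz, Int.emod_lt_of_pos x hdz', ?_⟩
      · simpa using hπx
      · rw [mul_comm]
        exact (Int.mul_ediv_add_emod x d).symm
    by_cases hts : 0 ≤ t
    · refine ⟨(t - a) * d, ?_⟩
      rintro _ ⟨x, hx, rfl⟩
      obtain ⟨s, r, hs, hr0, hrd, hxe⟩ := hblock x hx
      rw [Finset.mem_coe, Finset.mem_image]
      rcases hs with rfl | rfl
      · refine ⟨(t, r.toNat), ?_, ?_⟩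
        · rw [Finset.mem_product]
          exact ⟨hk1, Finset.mem_range.mpr (by omega)⟩
        · push_cast [Int.natAbs_of_nonneg hts, Int.toNat_of_nonneg hr0]
          rw [hxe]; ring
      · refine ⟨(t + 1, r.toNat), ?_, ?_⟩
        · rw [Finset.mem_product]
          exact ⟨hk2, Finset.mem_range.mpr (by omega)⟩
        · push_cast [Int.natAbs_of_nonneg (by omega : (0:ℤ) ≤ t + 1),
            Int.toNat_of_nonneg hr0]
          rw [hxe]; ring
    · refine ⟨(-t - 1 - a) * d, ?_⟩
      rintro _ ⟨x, hx, rfl⟩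
      obtain ⟨s, r, hs, hr0, hrd, hxe⟩ := hblock x hx
      rw [Finset.mem_coe, Finset.mem_image]
      rcases hs with rfl | rfl
      · refine ⟨(t + 1, r.toNat), ?_, ?_⟩
        · rw [Finset.mem_product]
          exact ⟨hk2, Finset.mem_range.mpr (by omega)⟩
        · have : ((t + 1).natAbs : ℤ) = -t - 1 := by omega
          push_cast [this, Int.toNat_of_nonneg hr0]
          rw [hxe]; ring
      · refine ⟨(t, r.toNat), ?_, ?_⟩
        · rw [Finset.mem_product]
          exact ⟨hk1, Finset.mem_range.mpr (by omega)⟩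
        · have : (t.natAbs : ℤ) = -t := by omega
          push_cast [this, Int.toNat_of_nonneg hr0]
          rw [hxe]; ring

/-- The `N > 0` case of the main theorem. -/
theorem main_pos (N d : ℕ) (hd : 0 < d) (hdvd : d ∣ N) (hN : 0 < N)
    (T : Finset (ZMod (N / d)))
    (Γ : SimpleGraph (ZMod (N / d)))
    (hchordal : IsChordal Γ)
    (hcover : (SimpleGraph.fromRel fun i j : ZMod (N / d) => i - j = 1) ≤ Γ)
    (hfreq : ∀ C : Set (ZMod (N / d)), Γ.IsClique C →
      (∀ C', Γ.IsClique C' → C ⊆ C' → C' = C) →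
      ∃ t : ZMod (N / d), (fun c => t + c) '' C ⊆ ↑T) :
    ∃ Γ' : SimpleGraph (ZMod N),
      IsChordal Γ' ∧
      (SimpleGraph.fromRel (fun i j : ZMod N =>
        ∃ m : ℕ, 1 ≤ m ∧ m ≤ d ∧ i - j = (m : ZMod N)) ≤ Γ') ∧
      ∀ C : Set (ZMod N), Γ'.IsClique C →
        (∀ C', Γ'.IsClique C' → C ⊆ C' → C' = C) →
        ∃ t : ZMod N, (fun c => t + c) '' C ⊆
          ↑((T ×ˢ Finset.range d).image (fun p => ((p.1.val * d + p.2 : ℕ) : ZMod N))) := by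
  haveI : NeZero N := ⟨hN.ne'⟩
  have hM : 0 < N / d := Nat.div_pos (Nat.le_of_dvd hN hdvd) hd
  haveI : NeZero (N / d) := ⟨hM.ne'⟩
  have hMd : N / d * d = N := Nat.div_mul_cancel hdvd
  have hMdd := hMd
  generalize hMdef : N / d = M at *
  set π : ZMod N → ZMod M := fun x => ((x.val / d : ℕ) : ZMod M) with hπdef
  have hsurj : Function.Surjective π := by
    intro q
    refine ⟨((q.val * d : ℕ) : ZMod N), ?_⟩
    have hlt : q.val * d < N := by
      have h1 : q.val < M := ZMod.val_lt q
      calc q.val * d < M * d := (Nat.mul_lt_mul_right hd).mpr h1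
        _ = N := hMd
    simp only [hπdef]
    rw [ZMod.val_natCast_of_lt hlt, Nat.mul_div_cancel _ hd]
    exact ZMod.natCast_zmod_val q
  have key : ∀ i j : ZMod N, ∀ m : ℕ, 1 ≤ m → m ≤ d → i - j = (m : ZMod N) →
      π i = π j ∨ π i = π j + 1 := by
    intro i j m hm1 hmd hij
    by_cases hM1 : M = 1
    · left
      haveI : Subsingleton (ZMod M) := by rw [hM1]; infer_instance
      exact Subsingleton.elim _ _
    · have hM2 : 2 ≤ M := by omega
      have hdN : d < N := by
        calc d = 1 * d := (one_mul d).symm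
          _ < M * d := by
            apply (Nat.mul_lt_mul_right hd).mpr
            omega
          _ = N := hMd
      have hieq : i = (m : ZMod N) + j := sub_eq_iff_eq_add.mp hij
      have hmv : ((m : ZMod N)).val = m := ZMod.val_natCast_of_lt (by omega)
      have hiv : i.val = (m + j.val) % N := by
        rw [hieq, ZMod.val_add, hmv]
      have hjv : j.val < N := ZMod.val_lt j
      by_cases hcase : m + j.val < N
      · have hiv' : i.val = j.val + m := by
          rw [hiv, Nat.mod_eq_of_lt hcase]; omega
        have hq1 : j.val / d ≤ i.val / d := by
          apply Nat.div_le_div_right; omega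
        have hq2 : i.val / d ≤ j.val / d + 1 := by
          have h1 : i.val / d ≤ (j.val + d) / d := by
            apply Nat.div_le_div_right; omega
          rwa [Nat.add_div_right _ hd] at h1
        rcases Nat.lt_or_ge (i.val / d) (j.val / d + 1) with hlt | hge
        · left
          simp only [hπdef]
          congr 1
          omega
        · right
          have : i.val / d = j.val / d + 1 := by omega
          simp only [hπdef]
          rw [this]
          push_cast
          ring
      · have hiv' : i.val = j.val + m - N := by
          rw [hiv, Nat.mod_eq_sub_mod (by omega), Nat.mod_eq_of_lt (by omega)]
          omega
        have hja : j.val / d = M - 1 := by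
          apply Nat.div_eq_of_lt_le
          · calc (M - 1) * d = M * d - d := by rw [Nat.sub_mul, one_mul]
              _ ≤ j.val := by omega
          · calc j.val < N := hjv
              _ = (M - 1 + 1) * d := by rw [Nat.sub_add_cancel (by omega), hMd]
        have hia : i.val / d = 0 := Nat.div_eq_of_lt (by omega)
        right
        simp only [hπdef]
        have hcast : ((M - 1 : ℕ) : ZMod M) + 1 = 0 := by
          have h1 : ((M - 1 : ℕ) : ZMod M) + 1 = ((M - 1 + 1 : ℕ) : ZMod M) := by
            push_cast; ring
          rw [h1, Nat.sub_add_cancel (by omega), ZMod.natCast_self]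
        rw [hja, hia, hcast]
        simp
  refine ⟨blowup π Γ, blowup_chordal π Γ hchordal, ?_, ?_⟩
  · intro i j hadj
    rw [SimpleGraph.fromRel_adj] at hadj
    obtain ⟨hne, hor⟩ := hadj
    refine ⟨hne, ?_⟩
    have step : ∀ i j : ZMod N, (∃ m : ℕ, 1 ≤ m ∧ m ≤ d ∧ i - j = (m : ZMod N)) →
        π i = π j ∨ Γ.Adj (π i) (π j) := by
      rintro i j ⟨m, hm1, hmd, hij⟩
      rcases key i j m hm1 hmd hij with h | h
      · exact Or.inl h
      · by_cases heq : π i = π j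
        · exact Or.inl heq
        · refine Or.inr (hcover ?_)
          rw [SimpleGraph.fromRel_adj]
          exact ⟨heq, Or.inl (by rw [h]; ring)⟩
    rcases hor with h | h
    · exact step i j h
    · rcases step j i h with h' | h'
      · exact Or.inl h'.symm
      · exact Or.inr h'.symm
  · intro C hC hmax
    obtain ⟨hSc, hSm⟩ := blowup_maxclique hsurj hC hmax
    obtain ⟨t, ht⟩ := hfreq _ hSc hSm
    refine ⟨((t.val * d : ℕ) : ZMod N), ?_⟩
    rintro _ ⟨x, hx, rfl⟩
    have hk : t + π x ∈ T := ht ⟨π x, ⟨x, hx, rfl⟩, rfl⟩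
    rw [Finset.mem_coe, Finset.mem_image]
    refine ⟨(t + π x, x.val % d), ?_, ?_⟩
    · rw [Finset.mem_product]
      exact ⟨hk, Finset.mem_range.mpr (Nat.mod_lt _ hd)⟩
    · show (((t + π x).val * d + x.val % d : ℕ) : ZMod N) = ↑(t.val * d) + x
      conv_rhs => rw [← ZMod.natCast_zmod_val x, ← Nat.cast_add]
      rw [ZMod.natCast_eq_natCast_iff]
      have hkval : t + π x = ((t.val + x.val / d : ℕ) : ZMod M) := by
        rw [Nat.cast_add]
        congr 1
        exact (ZMod.natCast_zmod_val t).symm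
      have hkv : (t + π x).val = (t.val + x.val / d) % M := by
        rw [hkval, ZMod.val_natCast]
      have hmod : (t + π x).val ≡ t.val + x.val / d [MOD M] := by
        rw [hkv]
        exact Nat.mod_modEq _ _
      have h1 : (t + π x).val * d ≡ (t.val + x.val / d) * d [MOD M * d] :=
        hmod.mul_right' _
      rw [hMd] at h1
      have h2 := h1.add_right (x.val % d)
      have hsplit : d * (x.val / d) + x.val % d = x.val := Nat.div_add_mod x.val d
      have hfinal : (t.val + x.val / d) * d + x.val % d = t.val * d + x.val := by
        calc (t.val + x.val / d) * d + x.val % d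
            = t.val * d + (d * (x.val / d) + x.val % d) := by ring
          _ = t.val * d + x.val := by rw [hsplit]
      rwa [hfinal] at h2

end CPT

/-- **Proposition 9: triangulating `C_N^d` from a triangulation of `C_{N/d}`.** If
`d ∣ N` and the cycle graph `C_{N/d}` has a chordal cover with frequencies
`T ⊆ ℤ_{N/d}` (every maximal clique has a translate inside `T`), then the `d`-th power
`C_N^d` of the `N`-cycle has a chordal cover with frequencies
`T' = {k·d + r : k ∈ T, 0 ≤ r < d} ⊆ ℤ_N`, and `|T'| ≤ d·|T|`. -/
theorem cycle_power_triangulation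
    (N d : ℕ) (hd : 0 < d) (hdvd : d ∣ N)
    (T : Finset (ZMod (N / d)))
    (Γ : SimpleGraph (ZMod (N / d)))
    (hchordal : IsChordal Γ)
    (hcover : (SimpleGraph.fromRel fun i j : ZMod (N / d) => i - j = 1) ≤ Γ)
    (hfreq : ∀ C : Set (ZMod (N / d)), Γ.IsClique C →
      (∀ C', Γ.IsClique C' → C ⊆ C' → C' = C) →
      ∃ t : ZMod (N / d), (fun c => t + c) '' C ⊆ ↑T) :
    let T' : Finset (ZMod N) :=
      (T ×ˢ Finset.range d).image (fun p => ((p.1.val * d + p.2 : ℕ) : ZMod N))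
    T'.card ≤ d * T.card ∧
    ∃ Γ' : SimpleGraph (ZMod N),
      IsChordal Γ' ∧
      (SimpleGraph.fromRel (fun i j : ZMod N =>
        ∃ m : ℕ, 1 ≤ m ∧ m ≤ d ∧ i - j = (m : ZMod N)) ≤ Γ') ∧
      ∀ C : Set (ZMod N), Γ'.IsClique C →
        (∀ C', Γ'.IsClique C' → C ⊆ C' → C' = C) →
        ∃ t : ZMod N, (fun c => t + c) '' C ⊆ ↑T' := by
  rcases Nat.eq_zero_or_pos N with hN0 | hN
  · subst hN0
    revert T Γ hchordal hcover hfreq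
    rw [Nat.zero_div]
    intro T Γ hchordal hcover hfreq
    intro T'
    constructor
    · calc T'.card ≤ (T ×ˢ Finset.range d).card := Finset.card_image_le
        _ = T.card * d := by rw [Finset.card_product, Finset.card_range]
        _ ≤ d * T.card := le_of_eq (mul_comm _ _)
    · exact CPT.main_zero d hd T Γ hcover hfreq
  · intro T'
    constructor
    · calc T'.card ≤ (T ×ˢ Finset.range d).card := Finset.card_image_le
        _ = T.card * d := by rw [Finset.card_product, Finset.card_range]
        _ ≤ d * T.card := le_of_eq (mul_comm _ _)
    · exact CPT.main_pos N d hd hdvd hN T Γ hchordal hcover hfreq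
end
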